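/- arXiv:0910.1959 — 3 statements merged into one kernel-verified Lean document; each statement's English description precedes it below -/
import Mathlib

section
/- Let R be a reduced elliptic root system of rank l with fundamental-set Π ∪ {a} and associated maps k and g. Then R = ⋃_{w∈W_Π} ⋃_{α∈Π} ((w(α) + ℤk(α)a) ∪ (w(2α) + g(α)k(α)a)), where the set w(2α) + g(α)k(α)a is empty if g(α) = ∅ and equals {w(2α) + mk(α)a : m an odd integer} if g(α) = 2ℤ+1. -/
/- ## Preliminaries: extended affine root systems (Saito) -/

noncomputable section

open Set

/-- The reflection `s_v : z ↦ z - (v^∨, z) v = z - (2 (v,z)/(v,v)) v` associated to a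
bilinear form `B` and a vector `v`.  (When `B v v = 0` this is the identity, by the
`division by zero = 0` convention; reflections are only ever used at non-isotropic `v`.) -/
def srefl {V : Type*} [AddCommGroup V] [Module ℝ V]
    (B : LinearMap.BilinForm ℝ V) (v : V) : Module.End ℝ V :=
  LinearMap.id - (((2 * (B v v)⁻¹) • (B v)).smulRight v)

/-- The Weyl group `W_S` generated by the reflections in the elements of `S`
(realized as the multiplicative closure; each generator is an involution, so this
agrees with the generated group). -/
def weyl {V : Type*} [AddCommGroup V] [Module ℝ V]
    (B : LinearMap.BilinForm ℝ V) (S : Set V) : Submonoid (Module.End ℝ V) :=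
  Submonoid.closure (srefl B '' S)

/-- The orbit `W_S · α`. -/
def worbit {V : Type*} [AddCommGroup V] [Module ℝ V]
    (B : LinearMap.BilinForm ℝ V) (S : Set V) (α : V) : Set V :=
  {v | ∃ w ∈ weyl B S, w α = v}

/-- `V⁰`, the set of isotropic vectors. -/
def nullSet {V : Type*} [AddCommGroup V] [Module ℝ V]
    (B : LinearMap.BilinForm ℝ V) : Set V := {v | B v v = 0}

/-- `ℤR`, the subgroup of `V` generated by `R`. -/
def zspan {V : Type*} [AddCommGroup V] (R : Set V) : AddSubgroup V :=
  AddSubgroup.closure R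

/-- `ℤ≥0 Π`, the set of nonnegative-integer linear combinations of elements of `Π`. -/
def nnspan {V : Type*} [AddCommMonoid V] (P : Set V) : Set V :=
  (AddSubmonoid.closure P : Set V)

/-- `(R, V)` is an `n`-extended affine root system of rank `l` (K. Saito). -/
structure IsEARS {V : Type*} [AddCommGroup V] [Module ℝ V]
    (B : LinearMap.BilinForm ℝ V) (R : Set V) (l n : ℕ) : Prop where
  rank_pos : 1 ≤ l
  findim : FiniteDimensional ℝ V
  symm : ∀ u v, B u v = B v u
  posSemidef : ∀ v, 0 ≤ B v v
  dim_eq : Module.finrank ℝ V = l + n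
  null_eq : nullSet B = (LinearMap.ker B : Set V)
  dim_null : Module.finrank ℝ (LinearMap.ker B) = n
  /-- (AX1), first half -/
  root_nonisotropic : ∀ α ∈ R, B α α ≠ 0
  /-- (AX1), second half -/
  span_eq_top : Submodule.span ℝ R = ⊤
  /-- (AX2) -/
  free : Module.Free ℤ (zspan R)
  /-- (AX2) -/
  rank_eq : Module.finrank ℤ (zspan R) = l + n
  /-- (AX3): `(α^∨, β) ∈ ℤ` -/
  integral : ∀ α ∈ R, ∀ β ∈ R, ∃ m : ℤ, 2 * B α β = (m : ℝ) * B α α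
  /-- (AX4) -/
  reflect : ∀ α ∈ R, srefl B α '' R = R
  /-- (AX5) -/
  connected : ∀ S' ⊆ R, S'.Nonempty → S' ≠ R → ∃ x ∈ S', ∃ y ∈ R \ S', B x y ≠ 0

/-- `R` is reduced, i.e. `R ∩ 2R = ∅`. -/
def IsReducedRS {V : Type*} [AddCommGroup V] [Module ℝ V] (R : Set V) : Prop :=
  ∀ α ∈ R, (2 : ℤ) • α ∉ R

/-- `Π₀` is a base (with `m` elements) of the root system `R₀`:
`Π₀ ⊆ R₀`, `Π₀` consists of `m` linearly independent elements, and
`R₀ = (R₀ ∩ ℤ≥0 Π₀) ∪ (R₀ ∩ ℤ≤0 Π₀)`. -/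
def IsBaseSet {M : Type*} [AddCommGroup M] [Module ℝ M] (R₀ P₀ : Set M) (m : ℕ) : Prop :=
  P₀ ⊆ R₀ ∧ P₀.Finite ∧ P₀.ncard = m ∧
  LinearIndependent ℝ ((↑) : P₀ → M) ∧
  R₀ = (R₀ ∩ nnspan P₀) ∪ (R₀ ∩ (-(nnspan P₀)))

/-- The bilinear form induced on a quotient `V ⧸ W` by a form vanishing on `W`. -/
def quotForm {V : Type*} [AddCommGroup V] [Module ℝ V]
    (W : Submodule ℝ V) (B : LinearMap.BilinForm ℝ V)
    (h1 : ∀ w ∈ W, B w = 0) (h2 : ∀ v : V, ∀ w ∈ W, B v w = 0) :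
    LinearMap.BilinForm ℝ (V ⧸ W) :=
  Submodule.liftQ W
    { toFun := fun v => Submodule.liftQ W (B v) (fun w hw => LinearMap.mem_ker.mpr (h2 v w hw))
      map_add' := fun u v => by
        ext x
        simp
      map_smul' := fun c v => by
        ext x
        simp }
    (fun w hw => by
      simp only [LinearMap.mem_ker]
      ext x
      simp [h1 w hw])

end

/-- A fundamental-set `Π ∪ {a}` of a reduced elliptic root system `R` of rank `l`:
(FS1) `a ∈ (ℤR)⁰` and `(ℤR)⁰ = ℤa ⊕ ℤb` for some `b`;
(FS2) `|Π| = l+1`, `Π ⊆ R` and `π_a(Π)` is a base of the affine root system `π_a(R)`. -/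
def IsFundamentalSet {V : Type*} [AddCommGroup V] [Module ℝ V]
    (B : LinearMap.BilinForm ℝ V) (R : Set V) (l : ℕ) (P : Set V) (a : V) : Prop :=
  a ∈ zspan R ∧ B a a = 0 ∧
  (∃ b : V, b ∈ zspan R ∧ B b b = 0 ∧
    ((zspan R : Set V) ∩ nullSet B = {v | ∃ m n : ℤ, v = m • a + n • b}) ∧
    (∀ m n : ℤ, m • a + n • b = 0 → m = 0 ∧ n = 0)) ∧
  P ⊆ R ∧ P.Finite ∧ P.ncard = l + 1 ∧
  IsBaseSet ((Submodule.span ℝ {a}).mkQ '' R) ((Submodule.span ℝ {a}).mkQ '' P) (l + 1)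

/-- The subset `⋃_{ε=±1} ((εα + ℤ kα a) ∪ (2εα + gα·kα a))` of the plane `ℝα ⊕ ℝa`;
here `gα : Bool`, with `false` encoding `g(α) = ∅` and `true` encoding `g(α) = 2ℤ+1`. -/
def kgLine {V : Type*} [AddCommGroup V] (a α : V) (kα : ℕ) (gα : Bool) : Set V :=
  {v | ∃ ε m : ℤ, (ε = 1 ∨ ε = -1) ∧ v = ε • α + (m * kα) • a} ∪
  {v | gα = true ∧ ∃ ε m : ℤ, (ε = 1 ∨ ε = -1) ∧ Odd m ∧ v = (2 * ε) • α + (m * kα) • a}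

/-- `k : Π → ℕ` and `g : Π → {∅, 2ℤ+1}` are the maps associated to the fundamental-set
`Π ∪ {a}`, i.e. `R ∩ (ℝα ⊕ ℝa) = ⋃_{ε=±1} ((εα + ℤ k(α) a) ∪ (2εα + g(α)k(α)a))`. -/
def IsKG {V : Type*} [AddCommGroup V] [Module ℝ V]
    (R : Set V) (a : V) (P : Set V) (k : V → ℕ) (g : V → Bool) : Prop :=
  ∀ α ∈ P, 0 < k α ∧
    R ∩ (Submodule.span ℝ {α, a} : Set V) = kgLine a α (k α) (g α)

/-- `c(α) = 1` if `g(α) = ∅`, `c(α) = 2` if `g(α) = 2ℤ+1`. -/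
def cMap {V : Type*} (g : V → Bool) (α : V) : ℕ := if g α then 2 else 1

/-- `α* := c(α)·α + k(α)·a`. -/
def starMap {V : Type*} [AddCommGroup V] (a : V) (k : V → ℕ) (g : V → Bool) (α : V) : V :=
  (cMap g α : ℤ) • α + (k α : ℤ) • a

/-- `B₊ := {α, α* | α ∈ Π}`. -/
def bplus {V : Type*} [AddCommGroup V] (a : V) (P : Set V) (k : V → ℕ) (g : V → Bool) :
    Set V :=
  P ∪ (starMap a k g '' P)

/-- `B := B₊ ∪ (−B₊)`. -/
def bfull {V : Type*} [AddCommGroup V] (a : V) (P : Set V) (k : V → ℕ) (g : V → Bool) :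
    Set V :=
  bplus a P k g ∪ (-(bplus a P k g))

/-- The set `R(Π,k,g) = ⋃_{w ∈ W_Π} ⋃_{α ∈ Π} ((w(α) + ℤk(α)a) ∪ (w(2α) + g(α)k(α)a))`. -/
def kgUnion {V : Type*} [AddCommGroup V] [Module ℝ V]
    (B : LinearMap.BilinForm ℝ V) (P : Set V) (a : V) (k : V → ℕ) (g : V → Bool) :
    Set V :=
  {v | ∃ w ∈ weyl B P, ∃ α ∈ P,
    (∃ m : ℤ, v = w α + (m * k α) • a) ∨
    (g α = true ∧ ∃ m : ℤ, Odd m ∧ v = w ((2 : ℤ) • α) + (m * k α) • a)}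

section Helpers
variable {V : Type*} [AddCommGroup V] [Module ℝ V] (B : LinearMap.BilinForm ℝ V)

lemma srefl_apply (v z : V) : srefl B v z = z - ((2 * (B v v)⁻¹) * B v z) • v := by
  rw [srefl, LinearMap.sub_apply, LinearMap.id_apply, LinearMap.smulRight_apply,
    LinearMap.smul_apply, smul_eq_mul]

lemma srefl_self {v : V} (hv : B v v ≠ 0) : srefl B v v = -v := by
  rw [srefl_apply, mul_assoc, inv_mul_cancel₀ hv, mul_one, two_smul]
  abel

lemma srefl_fix {v z : V} (hz : B v z = 0) : srefl B v z = z := by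
  rw [srefl_apply, hz, mul_zero, zero_smul, sub_zero]

lemma srefl_invol {v : V} (hv : B v v ≠ 0) (z : V) : srefl B v (srefl B v z) = z := by
  have h1 : B v (srefl B v z) = - B v z := by
    rw [srefl_apply, map_sub, map_smul, smul_eq_mul]
    field_simp
    ring
  rw [srefl_apply B v (srefl B v z), h1, srefl_apply]
  have : (2 * ((B v) v)⁻¹ * -(B v) z) = -(2 * ((B v) v)⁻¹ * (B v) z) := by ring
  rw [this, neg_smul]
  abel
end Helpers

section Weyl
variable {V : Type*} [AddCommGroup V] [Module ℝ V] {B : LinearMap.BilinForm ℝ V}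
  {R P : Set V} {a : V}

lemma weyl_maps_R (hrefl : ∀ α ∈ R, srefl B α '' R = R) (hPR : P ⊆ R) :
    ∀ w ∈ weyl B P, ∀ v ∈ R, w v ∈ R := by
  intro w hw
  induction hw using Submonoid.closure_induction with
  | mem x hx =>
      obtain ⟨α, hα, rfl⟩ := hx
      intro v hv
      rw [← hrefl α (hPR hα)]
      exact ⟨v, hv, rfl⟩
  | one => intro v hv; simpa using hv
  | mul x y hx hy ihx ihy =>
      intro v hv
      rw [Module.End.mul_apply]
      exact ihx _ (ihy v hv)

lemma weyl_fix (hP : ∀ α ∈ P, B α a = 0) :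
    ∀ w ∈ weyl B P, w a = a := by
  intro w hw
  induction hw using Submonoid.closure_induction with
  | mem x hx =>
      obtain ⟨α, hα, rfl⟩ := hx
      exact srefl_fix B (hP α hα)
  | one => rfl
  | mul x y hx hy ihx ihy => rw [Module.End.mul_apply, ihy, ihx]

lemma weyl_inv (hP : ∀ α ∈ P, B α α ≠ 0) :
    ∀ w ∈ weyl B P, ∃ w' ∈ weyl B P, ∀ v, w' (w v) = v := by
  intro w hw
  induction hw using Submonoid.closure_induction with
  | mem x hx =>
      obtain ⟨α, hα, rfl⟩ := hx
      exact ⟨srefl B α, Submonoid.subset_closure ⟨α, hα, rfl⟩,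
        fun v => srefl_invol B (hP α hα) v⟩
  | one => exact ⟨1, one_mem _, fun v => rfl⟩
  | mul x y hx hy ihx ihy =>
      obtain ⟨x', hx', hxi⟩ := ihx
      obtain ⟨y', hy', hyi⟩ := ihy
      exact ⟨y' * x', mul_mem hy' hx', fun v => by
        rw [Module.End.mul_apply, Module.End.mul_apply, hxi, hyi]⟩
end Weyl

section ClaimA
open Set
set_option maxHeartbeats 2000000 in

lemma claimA {V : Type*} [AddCommGroup V] [Module ℝ V]
    (B : LinearMap.BilinForm ℝ V) (R : Set V) (l : ℕ)
    (hE : IsEARS B R l 2) (P : Set V) (a : V)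
    (hfs : IsFundamentalSet B R l P a) :
    ∀ β ∈ R, ∃ w ∈ weyl B P, ∃ α ∈ P,
      w β ∈ (Submodule.span ℝ {α, a} : Submodule ℝ V) := by
  obtain ⟨haR, haa, -, hPR, hPfin, hPcard, hsub0, hfin0, hcard0, hli, hdec⟩ := hfs
  set Q : Submodule ℝ V := Submodule.span ℝ {a} with hQ
  set π : V →ₗ[ℝ] V ⧸ Q := Q.mkQ with hπ
  haveI : Fintype ↥P := hPfin.fintype
  -- B a = 0
  have hBa : B a = 0 := by
    have h1 : a ∈ nullSet B := haa
    rw [hE.null_eq] at h1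
    exact LinearMap.mem_ker.mp h1
  -- injectivity of π on P
  have hinj : Set.InjOn π P := by
    classical
    have h1 : (π '' P).ncard = P.ncard := by rw [hcard0, hPcard]
    have h2 : ((hPfin.toFinset.image π) : Set (V ⧸ Q)) = π '' P := by
      rw [Finset.coe_image, Set.Finite.coe_toFinset]
    have h3 : (hPfin.toFinset.image π).card = hPfin.toFinset.card := by
      rw [← Set.ncard_coe_finset, ← Set.ncard_coe_finset, h2, Set.Finite.coe_toFinset, h1]
    have h4 := Finset.injOn_of_card_image_eq h3
    rwa [Set.Finite.coe_toFinset] at h4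
  -- linear independence of the family indexed by P
  have hli' : LinearIndependent ℝ (fun i : ↥P => π (↑i : V)) := by
    have hf : Function.Injective (fun i : ↥P => (⟨π ↑i, Set.mem_image_of_mem _ i.2⟩ :
        ↥(π '' P))) := by
      intro i j hij
      exact Subtype.ext (hinj i.2 j.2 (congrArg Subtype.val hij))
    exact hli.comp _ hf
  have key : ∀ g : ↥P → ℝ, ∑ i, g i • π (↑i : V) = 0 → ∀ i, g i = 0 :=
    Fintype.linearIndependent_iff.mp hli'
  -- decomposition of elements of nnspan as nonneg integer combinations
  have decomp : ∀ x : V ⧸ Q, x ∈ nnspan (π '' P) →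
      ∃ n : ↥P → ℕ, x = ∑ i, (n i : ℝ) • π (↑i : V) := by
    classical
    intro x hx
    have hx' : x ∈ AddSubmonoid.closure (π '' P) := hx
    clear hx
    induction hx' using AddSubmonoid.closure_induction with
    | mem y hy =>
        obtain ⟨α, hα, rfl⟩ := hy
        refine ⟨fun i => if i = ⟨α, hα⟩ then 1 else 0, ?_⟩
        rw [Finset.sum_eq_single (⟨α, hα⟩ : ↥P)]
        · simp
        · intro j _ hj; simp [hj]
        · intro h; exact absurd (Finset.mem_univ _) h
    | zero => exact ⟨0, by simp⟩
    | add y z hy hz ihy ihz =>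
        obtain ⟨ny, hny⟩ := ihy
        obtain ⟨nz, hnz⟩ := ihz
        refine ⟨ny + nz, ?_⟩
        rw [hny, hnz, ← Finset.sum_add_distrib]
        congr 1; ext i
        rw [Pi.add_apply, Nat.cast_add, add_smul]
  -- main strong induction on height
  have main : ∀ h : ℕ, ∀ β ∈ R, ∀ n : ↥P → ℕ,
      π β = ∑ i, (n i : ℝ) • π (↑i : V) → (∑ i, n i) = h →
      ∃ w ∈ weyl B P, ∃ α ∈ P, w β ∈ (Submodule.span ℝ {α, a} : Submodule ℝ V) := by
    intro h
    induction h using Nat.strong_induction_on with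
    | _ h IH =>
      classical
      intro β hβ n hn hsum
      -- lift the coordinate expression to V
      have h0 : π (β - ∑ i, (n i : ℝ) • (↑i : V)) = 0 := by
        rw [map_sub, map_sum]
        simp only [map_smul]
        rw [hn, sub_self]
      have h1 : β - ∑ i, (n i : ℝ) • (↑i : V) ∈ Q := by
        rwa [hπ, Submodule.mkQ_apply, Submodule.Quotient.mk_eq_zero] at h0
      rw [hQ, Submodule.mem_span_singleton] at h1
      obtain ⟨t, ht⟩ := h1
      have hβeq : β = ∑ i, (n i : ℝ) • (↑i : V) + t • a := by
        rw [ht]; abel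
      -- positivity of B β β
      have hβpos : 0 < B β β := lt_of_le_of_ne (hE.posSemidef β)
        (Ne.symm (hE.root_nonisotropic β hβ))
      have hBsum : B β β = ∑ i, (n i : ℝ) * B (↑i : V) β := by
        nth_rewrite 1 [hβeq]
        rw [map_add, map_smul, hBa, smul_zero, map_sum, LinearMap.add_apply,
          LinearMap.zero_apply, add_zero, LinearMap.sum_apply]
        simp [LinearMap.smul_apply, smul_eq_mul]
      -- find a simple root pairing positively with β
      have hex : ∃ i : ↥P, 0 < n i ∧ 0 < B (↑i : V) β := by
        by_contra hcon
        push_neg at hcon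
        have : ∑ i, (n i : ℝ) * B (↑i : V) β ≤ 0 := by
          apply Finset.sum_nonpos
          intro i _
          rcases Nat.eq_zero_or_pos (n i) with h'|h'
          · rw [h']; simp
          · have := hcon i h'
            have hni : (0:ℝ) ≤ n i := Nat.cast_nonneg _
            nlinarith
        rw [hBsum] at hβpos
        linarith
      obtain ⟨i₀, hn₀, hB₀⟩ := hex
      obtain ⟨α, hαdef⟩ : ∃ α : V, α = (↑i₀ : V) := ⟨_, rfl⟩
      rw [← hαdef] at hB₀
      have hαP : α ∈ P := by rw [hαdef]; exact i₀.2
      have hαR : α ∈ R := hPR hαP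
      have hαα : 0 < B α α := lt_of_le_of_ne (hE.posSemidef α)
        (Ne.symm (hE.root_nonisotropic α hαR))
      obtain ⟨m, hm⟩ := hE.integral α hαR β hβ
      have hm1 : 1 ≤ m := by
        have h2 : (0:ℝ) < (m : ℝ) * B α α := by rw [← hm]; linarith
        have h3 : (0:ℝ) < (m : ℝ) := by
          rcases mul_pos_iff.mp h2 with ⟨h', _⟩ | ⟨-, h'⟩
          · exact h'
          · linarith
        have h4 : (0:ℤ) < m := by exact_mod_cast h3
        omega
      have hαne : B α α ≠ 0 := ne_of_gt hαα
      have hγeq : srefl B α β = β - (m : ℝ) • α := by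
        have hc : (2 * (B α α)⁻¹ * B α β) = (m:ℝ) := by
          field_simp
          linarith [hm]
        rw [srefl_apply, hc]
      by_cases hsupp : ∀ j : ↥P, j ≠ i₀ → n j = 0
      · -- β already lies in the plane spanned by α and a
        refine ⟨1, one_mem _, α, hαP, ?_⟩
        have hssum : ∑ i, (n i : ℝ) • (↑i : V) = (n i₀ : ℝ) • α := by
          rw [hαdef]
          exact Finset.sum_eq_single_of_mem i₀ (Finset.mem_univ _)
            (fun j _ hj => by rw [hsupp j hj]; simp)
        have hmem : β ∈ (Submodule.span ℝ {α, a} : Submodule ℝ V) := by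
          rw [hβeq, hssum]
          exact Submodule.add_mem _
            (Submodule.smul_mem _ _ (Submodule.subset_span (Set.mem_insert _ _)))
            (Submodule.smul_mem _ _ (Submodule.subset_span
              (Set.mem_insert_of_mem _ rfl)))
        exact hmem
      · push_neg at hsupp
        obtain ⟨j, hjne, hjnz⟩ := hsupp
        have hγR : srefl B α β ∈ R := by
          rw [← hE.reflect α hαR]
          exact ⟨β, hβ, rfl⟩
        have hπγ : π (srefl B α β) = ∑ i, (n i : ℝ) • π (↑i : V) - (m : ℝ) • π α := by
          rw [hγeq, map_sub, map_smul, hn]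
        have hπγR : π (srefl B α β) ∈ (π '' R) := ⟨_, hγR, rfl⟩
        rw [hdec] at hπγR
        have hite : ∑ i, (if i = i₀ then (m:ℝ) else 0) • π (↑i : V) = (m:ℝ) • π α := by
          rw [hαdef, Finset.sum_eq_single i₀]
          · simp
          · intro j' _ hj'; simp [hj']
          · intro h'; exact absurd (Finset.mem_univ _) h'
        have hite2 : ∑ i : ↥P, (if i = i₀ then (m:ℝ) else 0) = (m:ℝ) := by
          rw [Finset.sum_eq_single i₀]
          · rw [if_pos rfl]
          · intro j' _ hj'; rw [if_neg hj']
          · intro h'; exact absurd (Finset.mem_univ _) h'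
        rcases hπγR with hpos | hneg
        · -- positive case: descend
          obtain ⟨p, hp⟩ := decomp _ hpos.2
          have hg : ∑ i, ((n i : ℝ) - (p i : ℝ) - (if i = i₀ then (m:ℝ) else 0))
              • π (↑i : V) = 0 := by
            simp only [sub_smul]
            rw [Finset.sum_sub_distrib, Finset.sum_sub_distrib, hite, ← hp, hπγ]
            abel
          have hkey := key _ hg
          have hpn : ∀ i : ↥P, (p i : ℝ) = (n i : ℝ) - (if i = i₀ then (m:ℝ) else 0) := by
            intro i
            have := hkey i
            linarith
          have hlt : (∑ i, p i) < h := by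
            have h5 : (∑ i, (p i:ℝ)) = (∑ i, (n i:ℝ)) - (m:ℝ) := by
              rw [Finset.sum_congr rfl (fun i _ => hpn i), Finset.sum_sub_distrib, hite2]
            have h6 : ((∑ i, p i : ℕ) : ℝ) < ((∑ i, n i : ℕ) : ℝ) := by
              push_cast
              rw [h5]
              have : (1:ℝ) ≤ (m:ℝ) := by exact_mod_cast hm1
              push_cast
              linarith
            have h7 : (∑ i, p i) < (∑ i, n i) := by exact_mod_cast h6
            omega
          obtain ⟨w', hw', α', hα', hmem⟩ := IH _ hlt (srefl B α β) hγR p hp rfl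
          refine ⟨w' * srefl B α, mul_mem hw'
            (Submonoid.subset_closure ⟨α, hαP, rfl⟩), α', hα', ?_⟩
          rw [Module.End.mul_apply]
          exact hmem
        · -- negative case: impossible
          exfalso
          have hneg' : -(π (srefl B α β)) ∈ nnspan (π '' P) := Set.mem_neg.mp hneg.2
          obtain ⟨p, hp⟩ := decomp _ hneg'
          have hg : ∑ i, ((n i : ℝ) + (p i : ℝ) - (if i = i₀ then (m:ℝ) else 0))
              • π (↑i : V) = 0 := by
            simp only [sub_smul, add_smul]
            rw [Finset.sum_sub_distrib, Finset.sum_add_distrib, hite, ← hp, hπγ]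
            abel
          have hkey := key _ hg j
          rw [if_neg hjne] at hkey
          have h8 : (1:ℝ) ≤ (n j : ℝ) := by
            have : 1 ≤ n j := Nat.one_le_iff_ne_zero.mpr hjnz
            exact_mod_cast this
          have h9 : (0:ℝ) ≤ (p j : ℝ) := Nat.cast_nonneg _
          linarith
  -- conclude
  intro β hβ
  have hπβ : π β ∈ (π '' R) := ⟨β, hβ, rfl⟩
  rw [hdec] at hπβ
  rcases hπβ with hpos | hneg
  · obtain ⟨n, hn⟩ := decomp _ hpos.2
    exact main _ β hβ n hn rfl
  · have hβneg : -β ∈ R := by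
      have h1 : srefl B β β ∈ R := by
        rw [← hE.reflect β hβ]; exact ⟨β, hβ, rfl⟩
      rwa [srefl_self B (hE.root_nonisotropic β hβ)] at h1
    have h2 : π (-β) ∈ nnspan (π '' P) := by
      rw [map_neg]
      exact Set.mem_neg.mp hneg.2
    obtain ⟨n, hn⟩ := decomp _ h2
    obtain ⟨w, hw, α, hα, hmem⟩ := main _ (-β) hβneg n hn rfl
    refine ⟨w, hw, α, hα, ?_⟩
    have h3 : w β = -(w (-β)) := by rw [map_neg, neg_neg]
    rw [h3]
    exact Submodule.neg_mem _ hmem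
end ClaimA

set_option maxHeartbeats 2000000

/-- `R = ⋃_{w ∈ W_Π} ⋃_{α ∈ Π} ((w(α) + ℤk(α)a) ∪ (w(2α) + g(α)k(α)a))`. -/
theorem stmt9 {V : Type*} [AddCommGroup V] [Module ℝ V]
    (B : LinearMap.BilinForm ℝ V) (R : Set V) (l : ℕ)
    (hE : IsEARS B R l 2) (hred : IsReducedRS R)
    (P : Set V) (a : V) (hfs : IsFundamentalSet B R l P a)
    (k : V → ℕ) (g : V → Bool) (hkg : IsKG R a P k g) :
    R = kgUnion B P a k g := by
  have hPR : P ⊆ R := hfs.2.2.2.1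
  have hBa : B a = 0 := by
    have h1 : a ∈ nullSet B := hfs.2.1
    rw [hE.null_eq] at h1
    exact LinearMap.mem_ker.mp h1
  have hBva : ∀ α ∈ P, B α a = 0 := fun α _ => by
    rw [hE.symm α a, hBa]; rfl
  have hne : ∀ α ∈ P, B α α ≠ 0 := fun α hα => hE.root_nonisotropic α (hPR hα)
  have hwa : ∀ w ∈ weyl B P, w a = a := weyl_fix hBva
  have hwR : ∀ w ∈ weyl B P, ∀ v ∈ R, w v ∈ R := weyl_maps_R hE.reflect hPR
  have hwinv : ∀ w ∈ weyl B P, ∃ w' ∈ weyl B P, ∀ v, w' (w v) = v := weyl_inv hne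
  have hsmem : ∀ α ∈ P, srefl B α ∈ weyl B P := fun α hα =>
    Submonoid.subset_closure ⟨α, hα, rfl⟩
  have hsneg : ∀ α ∈ P, srefl B α α = -α := fun α hα => srefl_self B (hne α hα)
  ext v
  constructor
  · -- R ⊆ kgUnion
    intro hv
    obtain ⟨w, hw, α, hα, hmem⟩ := claimA B R l hE P a hfs v hv
    have hwvR : w v ∈ R := hwR w hw v hv
    have hline : w v ∈ kgLine a α (k α) (g α) := by
      rw [← (hkg α hα).2]
      exact ⟨hwvR, hmem⟩
    obtain ⟨w', hw', hw'inv⟩ := hwinv w hw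
    have hw'a : w' a = a := hwa w' hw'
    rcases hline with ⟨ε, m, hε, heq⟩ | ⟨hgα, ε, m, hε, hodd, heq⟩
    · -- w v = ε • α + (m k α) • a
      have hveq : v = ε • w' α + (m * (k α : ℤ)) • a := by
        rw [← hw'inv v, heq, map_add, map_zsmul, map_zsmul, hw'a]
      rcases hε with rfl | rfl
      · exact ⟨w', hw', α, hα, Or.inl ⟨m, by rw [hveq, one_zsmul]⟩⟩
      · refine ⟨w' * srefl B α, mul_mem hw' (hsmem α hα), α, hα, Or.inl ⟨m, ?_⟩⟩
        rw [Module.End.mul_apply, hsneg α hα, map_neg, hveq, neg_one_zsmul]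
    · -- w v = (2ε) • α + (m k α) • a
      have hveq : v = (2 * ε) • w' α + (m * (k α : ℤ)) • a := by
        rw [← hw'inv v, heq, map_add, map_zsmul, map_zsmul, hw'a]
      rcases hε with rfl | rfl
      · refine ⟨w', hw', α, hα, Or.inr ⟨hgα, m, hodd, ?_⟩⟩
        rw [map_zsmul, hveq]
        norm_num
      · refine ⟨w' * srefl B α, mul_mem hw' (hsmem α hα), α, hα,
          Or.inr ⟨hgα, m, hodd, ?_⟩⟩
        rw [Module.End.mul_apply, map_zsmul, hsneg α hα, map_zsmul, map_neg, hveq]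
        module
  · -- kgUnion ⊆ R
    rintro ⟨w, hw, α, hα, hcase⟩
    have hwa' : w a = a := hwa w hw
    rcases hcase with ⟨m, rfl⟩ | ⟨hgα, m, hodd, rfl⟩
    · have hξ : α + (m * (k α : ℤ)) • a ∈ kgLine a α (k α) (g α) :=
        Or.inl ⟨1, m, Or.inl rfl, by rw [one_zsmul]⟩
      have hξR : α + (m * (k α : ℤ)) • a ∈ R := by
        rw [← (hkg α hα).2] at hξ
        exact hξ.1
      have h2 : w α + (m * (k α : ℤ)) • a = w (α + (m * (k α : ℤ)) • a) := by
        rw [map_add, map_zsmul, hwa']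
      rw [h2]
      exact hwR w hw _ hξR
    · have hξ : (2 : ℤ) • α + (m * (k α : ℤ)) • a ∈ kgLine a α (k α) (g α) :=
        Or.inr ⟨hgα, 1, m, Or.inl rfl, hodd, by norm_num⟩
      have hξR : (2 : ℤ) • α + (m * (k α : ℤ)) • a ∈ R := by
        rw [← (hkg α hα).2] at hξ
        exact hξ.1
      have h2 : w ((2:ℤ) • α) + (m * (k α : ℤ)) • a
          = w ((2:ℤ) • α + (m * (k α : ℤ)) • a) := by
        rw [map_add, map_zsmul, map_zsmul, hwa']
      rw [h2]
      exact hwR w hw _ hξR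
end

section
/- Let R be a reduced elliptic root system of rank l = 1 with fundamental-set Π ∪ {a} and associated maps k and g. Write Π = {α₁, α₀}, where {π(α₁)} is a base of π(R), and assume k(α₁) ≤ k(α₀) in case {π(α₀)} is also a base of π(R). Then k(α₁) = 1 and the quadruple ((α₀^∨,α₁), k(α₀), g(α₀), g(α₁)) is exactly one of the following eleven tuples: (−2,1,∅,∅); (−2,1,∅,2ℤ+1); (−2,1,2ℤ+1,∅); (−2,1,2ℤ+1,2ℤ+1); (−2,2,∅,∅); (−2,2,2ℤ+1,∅); (−1,1,∅,∅); (−1,1,∅,2ℤ+1); (−1,2,∅,∅); (−1,2,∅,2ℤ+1); (−1,4,∅,∅). -/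
-- ### auxiliary machinery for the proof
private def v3 {V : Type*} [AddCommGroup V] [Module ℝ V] (α a b : V) (r x y : ℤ) : V :=
  (r : ℝ) • α + (x : ℝ) • a + (y : ℝ) • b

private lemma pair_indep {M : Type*} [AddCommGroup M] [Module ℝ M] {S : Set M}
    (h : LinearIndependent ℝ ((↑) : S → M)) {u v : M} (hu : u ∈ S) (hv : v ∈ S)
    (huv : u ≠ v) (p q : ℝ) (hpq : p • u + q • v = 0) : p = 0 ∧ q = 0 := by
  have hinj : Function.Injective (![(⟨u, hu⟩ : S), ⟨v, hv⟩]) := by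
    intro i j hij
    fin_cases i <;> fin_cases j <;> simp_all [Subtype.ext_iff]
  have h2 := h.comp _ hinj
  have hfe : ((↑) : S → M) ∘ (![(⟨u, hu⟩ : S), ⟨v, hv⟩]) = ![u, v] := by
    funext i; fin_cases i <;> rfl
  rw [hfe] at h2
  exact LinearIndependent.pair_iff.mp h2 p q hpq

private lemma v3_add {V : Type*} [AddCommGroup V] [Module ℝ V] (α a b : V)
    (r x y r' x' y' : ℤ) :
    v3 α a b r x y + v3 α a b r' x' y' = v3 α a b (r+r') (x+x') (y+y') := by
  simp only [v3]; push_cast; module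

private lemma v3_neg {V : Type*} [AddCommGroup V] [Module ℝ V] (α a b : V) (r x y : ℤ) :
    - v3 α a b r x y = v3 α a b (-r) (-x) (-y) := by
  simp only [v3]; push_cast; module

private lemma v3_zero {V : Type*} [AddCommGroup V] [Module ℝ V] (α a b : V) :
    v3 α a b 0 0 0 = 0 := by
  simp [v3]

private lemma v3_smul_comb {V : Type*} [AddCommGroup V] [Module ℝ V] (α a b : V)
    (r x y ε t : ℤ) :
    ε • (v3 α a b r x y) + t • a = v3 α a b (ε*r) (ε*x + t) (ε*y) := by
  simp only [v3, ← Int.cast_smul_eq_zsmul ℝ]; push_cast; module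

private lemma T_congr {T : ℤ → ℤ → ℤ → Prop} {r x y r' x' y' : ℤ} (h : T r x y)
    (h1 : r' = r) (h2 : x' = x) (h3 : y' = y) : T r' x' y' := by
  subst h1; subst h2; subst h3; exact h

private lemma dvd_congr' {a b c : ℤ} (h : a ∣ b) (e : c = b) : a ∣ c := e ▸ h



lemma core_main (T : ℤ → ℤ → ℤ → Prop) (k k₀ x₀ r₀ : ℤ) (g₁ g₀ : Bool)
    (hk : 0 < k) (hk₀ : 0 < k₀)
    (hr₀ : r₀ = -1 ∨ r₀ = -2)
    (hrefl : ∀ r x y r' x' y' t, T r x y → T r' x' y' → t * r' = 2 * r →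
      T (-r) (x - t * x') (y - t * y'))
    (hrange : ∀ r x y, T r x y → r = 1 ∨ r = -1 ∨ r = 2 ∨ r = -2)
    (hP1 : ∀ r x, T r x 0 ↔ ((r = 1 ∨ r = -1) ∧ k ∣ x) ∨
      ((r = 2 ∨ r = -2) ∧ g₁ = true ∧ ∃ m, Odd m ∧ x = m * k))
    (hP0s : ∀ ε x, (ε = 1 ∨ ε = -1) → (T (ε * r₀) x ε ↔ k₀ ∣ x - ε * x₀))
    (hP0l : ∀ ε x, (ε = 1 ∨ ε = -1) →
      (T (2 * (ε * r₀)) x (2 * ε) ↔ g₀ = true ∧ ∃ m, Odd m ∧ x = 2 * ε * x₀ + m * k₀))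
    (hprim : ∀ d : ℤ, 0 < d → (∀ r x y, T r x y → d ∣ x - y * x₀) → d = 1)
    (hmin2 : r₀ = -1 → k ≤ k₀) :
    k = 1 ∧ ((r₀ = -1 ∧ k₀ = 1) ∨ (r₀ = -1 ∧ k₀ = 2 ∧ g₁ = false) ∨
      (r₀ = -2 ∧ g₀ = false ∧ (k₀ = 1 ∨ k₀ = 2)) ∨
      (r₀ = -2 ∧ g₀ = false ∧ k₀ = 4 ∧ g₁ = false)) := by
  have hα₁ : T 1 0 0 := (hP1 1 0).mpr (Or.inl ⟨Or.inl rfl, dvd_zero k⟩)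
  have hα₀ : T r₀ x₀ 1 := by
    have := (hP0s 1 x₀ (Or.inl rfl)).mpr (by simp)
    exact T_congr this (by ring) rfl rfl
  have hflip : ∀ r x y, T r x y → T (-r) x y := by
    intro r x y h
    exact T_congr (hrefl r x y 1 0 0 (2*r) h hα₁ (by ring)) rfl (by ring) (by ring)
  have hneg : ∀ r x y, T r x y → T (-r) (-x) (-y) := by
    intro r x y h
    exact T_congr (hrefl r x y r x y 2 h h (by ring)) rfl (by ring) (by ring)
  have hshort : ∀ s x y, (s = 1 ∨ s = -1) → T (2*s) x y → T (-1) (-(s*x)) (-(s*y)) := by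
    intro s x y hs h
    have := hrefl 1 0 0 (2*s) x y s hα₁ h (by rcases hs with rfl|rfl <;> ring)
    exact T_congr this rfl (by ring) (by ring)
  have hγk : T 1 k 0 := (hP1 1 k).mpr (Or.inl ⟨Or.inl rfl, dvd_refl k⟩)
  have hP0s1 : ∀ x, T r₀ x 1 ↔ k₀ ∣ x - x₀ := by
    intro x
    have := hP0s 1 x (Or.inl rfl)
    constructor
    · intro h; exact (by simpa using this.mp (T_congr h (by ring) rfl rfl))
    · intro h; exact T_congr (this.mpr (by simpa using h)) (by ring) rfl rfl
  have signchoice : ∀ y : ℤ, y ≠ 0 → ∃ s : ℤ, (s = 1 ∨ s = -1) ∧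
      ((0 < y ∧ s = 1) ∨ (y < 0 ∧ s = -1)) := by
    intro y hy
    rcases lt_or_gt_of_ne hy with h|h
    · exact ⟨-1, Or.inr rfl, Or.inr ⟨h, rfl⟩⟩
    · exact ⟨1, Or.inl rfl, Or.inl ⟨h, rfl⟩⟩
  have getms : ∀ r x y s, (r = 1 ∨ r = -1) → (s = 1 ∨ s = -1) → T r x y → T (-s) x y := by
    intro r x y s hr hs h
    rcases hr with rfl|rfl <;> rcases hs with rfl|rfl
    · exact T_congr (hflip 1 x y h) (by ring) rfl rfl
    · exact T_congr h (by ring) rfl rfl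
    · exact T_congr h (by ring) rfl rfl
    · exact T_congr (hflip (-1) x y h) (by ring) rfl rfl
  rcases hr₀ with hr₀1 | hr₀2
  · -- case r₀ = -1
    subst hr₀1
    have hdesc : ∀ s x y, (s = 1 ∨ s = -1) → T (-s) x y → T s (x - 2*s*x₀) (y - 2*s) := by
      intro s x y hs h
      exact T_congr (hrefl (-s) x y (-1) x₀ 1 (2*s) h hα₀ (by ring)) (by ring) rfl (by ring)
    have Wshort : ∀ n : ℕ, ∀ r x y, y.natAbs ≤ n → (r = 1 ∨ r = -1) → T r x y →
        (Even y → k ∣ x - y * x₀) ∧ (Odd y → k₀ ∣ x - y * x₀) := by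
      intro n
      induction n with
      | zero =>
        intro r x y hy hr h
        have hy0 : y = 0 := by omega
        subst hy0
        refine ⟨fun _ => ?_, fun hodd => absurd hodd (by decide)⟩
        rcases (hP1 r x).mp h with ⟨_, hdvd⟩ | ⟨hr2, _⟩
        · exact dvd_congr' hdvd (by ring)
        · rcases hr with rfl|rfl <;> rcases hr2 with h2|h2 <;> omega
      | succ n ih =>
        intro r x y hy hr h
        rcases eq_or_ne y 0 with rfl | hy0
        · refine ⟨fun _ => ?_, fun hodd => absurd hodd (by decide)⟩
          rcases (hP1 r x).mp h with ⟨_, hdvd⟩ | ⟨hr2, _⟩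
          · exact dvd_congr' hdvd (by ring)
          · rcases hr with rfl|rfl <;> rcases hr2 with h2|h2 <;> omega
        · rcases eq_or_ne y 1 with rfl | hy1
          · have h1 : T (-1) x 1 := getms r x 1 1 hr (Or.inl rfl) h
            have := (hP0s1 x).mp h1
            exact ⟨fun he => absurd he (by decide), fun _ => dvd_congr' this (by ring)⟩
          · rcases eq_or_ne y (-1) with rfl | hym1
            · have h1 : T 1 x (-1) := getms r x (-1) (-1) hr (Or.inr rfl) h
              have h2 : T (-1) (-x) 1 := T_congr (hneg 1 x (-1) h1) rfl rfl (by ring)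
              have := (hP0s1 (-x)).mp h2
              refine ⟨fun he => absurd he (by decide), fun _ => ?_⟩
              exact dvd_congr' (dvd_neg.mpr this) (by ring)
            · obtain ⟨s, hs, hsy⟩ := signchoice y hy0
              have hms : T (-s) x y := getms r x y s hr hs h
              have hnew := hdesc s x y hs hms
              have habs : (y - 2*s).natAbs ≤ n := by
                rcases hsy with ⟨h0, rfl⟩|⟨h0, rfl⟩ <;> omega
              have key := ih s (x - 2*s*x₀) (y - 2*s) habs hs hnew
              constructor
              · intro he
                have he' : Even (y - 2*s) := by rcases he with ⟨c, hc⟩; exact ⟨c - s, by omega⟩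
                exact dvd_congr' (key.1 he') (by ring)
              · intro ho
                have ho' : Odd (y - 2*s) := by rcases ho with ⟨c, hc⟩; exact ⟨c - s, by omega⟩
                exact dvd_congr' (key.2 ho') (by ring)
    have W : ∀ r x y, T r x y →
        (Even y → k ∣ x - y * x₀) ∧ (Odd y → k₀ ∣ x - y * x₀) := by
      intro r x y h
      rcases hrange r x y h with rfl | rfl | rfl | rfl
      · exact Wshort y.natAbs 1 x y le_rfl (Or.inl rfl) h
      · exact Wshort y.natAbs (-1) x y le_rfl (Or.inr rfl) h
      · have h2 : T (-1) (-x) (-y) :=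
          T_congr (hshort 1 x y (Or.inl rfl) (T_congr h (by ring) rfl rfl)) rfl (by ring) (by ring)
        have key := Wshort (-y).natAbs (-1) (-x) (-y) le_rfl (Or.inr rfl) h2
        constructor
        · intro he
          exact dvd_congr' (dvd_neg.mpr (key.1 (by simpa using he.neg))) (by ring)
        · intro ho
          exact dvd_congr' (dvd_neg.mpr (key.2 (by simpa using ho.neg))) (by ring)
      · have h2 : T (-1) x y :=
          T_congr (hshort (-1) x y (Or.inr rfl) (T_congr h (by ring) rfl rfl)) rfl (by ring) (by ring)
        exact Wshort y.natAbs (-1) x y le_rfl (Or.inr rfl) h2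
    have hgcd : Int.gcd k k₀ = 1 := by
      have hd : (0:ℤ) < (Int.gcd k k₀ : ℤ) := by
        have : Int.gcd k k₀ ≠ 0 := by
          intro hc
          rw [Int.gcd_eq_zero_iff] at hc
          omega
        positivity
      have := hprim (Int.gcd k k₀ : ℤ) hd (by
        intro r x y h
        rcases Int.even_or_odd y with he | ho
        · exact dvd_trans (Int.gcd_dvd_left k k₀) ((W r x y h).1 he)
        · exact dvd_trans (Int.gcd_dvd_right k k₀) ((W r x y h).2 ho))
      exact_mod_cast this
    have hk2k₀ : k ∣ 2 * k₀ := by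
      have u : T (-1) (2*x₀) 2 :=
        T_congr (hrefl 1 0 0 (-1) x₀ 1 (-2) hα₁ hα₀ (by ring)) rfl (by ring) (by ring)
      have γ₁ : T (-1) (x₀ + k₀) 1 := (hP0s1 (x₀ + k₀)).mpr (by simp)
      have v : T 1 (-(2*k₀)) 0 :=
        T_congr (hrefl (-1) (2*x₀) 2 (-1) (x₀+k₀) 1 2 u γ₁ (by ring)) (by ring) (by ring) (by ring)
      rcases (hP1 1 (-(2*k₀))).mp v with ⟨_, hdvd⟩ | ⟨hr2, _⟩
      · exact dvd_neg.mp hdvd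
      · omega
    have hk₀2k : k₀ ∣ 2 * k := by
      have u2 : T 1 x₀ 1 := T_congr (hflip (-1) x₀ 1 hα₀) (by ring) rfl rfl
      have v : T (-1) (x₀ - 2*k) 1 :=
        T_congr (hrefl 1 x₀ 1 1 k 0 2 u2 hγk (by ring)) rfl (by ring) (by ring)
      have := (hP0s1 (x₀ - 2*k)).mp v
      exact dvd_congr' (dvd_neg.mpr this) (by ring)
    have hg₁k : g₁ = true → k₀ ∣ k := by
      intro hg
      have δ : T 2 k 0 := (hP1 2 k).mpr (Or.inr ⟨Or.inl rfl, hg, 1, odd_one, by ring⟩)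
      have v : T 1 (x₀ + k) 1 :=
        T_congr (hrefl (-1) x₀ 1 2 k 0 (-1) hα₀ δ (by ring)) (by ring) (by ring) (by ring)
      have v2 : T (-1) (x₀ + k) 1 := T_congr (hflip 1 (x₀+k) 1 v) rfl rfl rfl
      have := (hP0s1 (x₀ + k)).mp v2
      exact dvd_congr' this (by ring)
    have hcop : IsCoprime k k₀ := Int.isCoprime_iff_gcd_eq_one.mpr hgcd
    have hkd2 : k ∣ 2 := hcop.dvd_of_dvd_mul_right hk2k₀
    have hmin : k ≤ k₀ := hmin2 rfl
    have hk1 : k = 1 := by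
      have hle : k ≤ 2 := Int.le_of_dvd (by norm_num) hkd2
      interval_cases k
      · rfl
      · exfalso
        have hnot2 : ¬ (2:ℤ) ∣ k₀ := by
          intro hdvd
          have := hcop.isUnit_of_dvd' dvd_rfl hdvd
          rw [Int.isUnit_iff] at this
          omega
        have hk₀4 : k₀ ∣ 4 := dvd_trans hk₀2k (by norm_num)
        have hle4 : k₀ ≤ 4 := Int.le_of_dvd (by norm_num) hk₀4
        interval_cases k₀
        · exact hnot2 (by decide)
        · exact absurd hk₀4 (by decide)
        · exact hnot2 (by decide)
    subst hk1
    have hk₀2 : k₀ ∣ 2 := by simpa using hk₀2k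
    have hk₀le : k₀ ≤ 2 := Int.le_of_dvd (by norm_num) hk₀2
    refine ⟨rfl, ?_⟩
    interval_cases k₀
    · exact Or.inl ⟨rfl, rfl⟩
    · refine Or.inr (Or.inl ⟨rfl, rfl, ?_⟩)
      cases hg : g₁
      · rfl
      · exfalso; have := hg₁k hg; omega
  · -- case r₀ = -2
    subst hr₀2
    have hdesc : ∀ s x y, (s = 1 ∨ s = -1) → T (-s) x y → T s (x - s*x₀) (y - s) := by
      intro s x y hs h
      exact T_congr (hrefl (-s) x y (-2) x₀ 1 s h hα₀
        (by rcases hs with rfl|rfl <;> ring)) (by ring) rfl (by ring)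
    have Wshort : ∀ n : ℕ, ∀ r x y, y.natAbs ≤ n → (r = 1 ∨ r = -1) → T r x y →
        k ∣ x - y * x₀ := by
      intro n
      induction n with
      | zero =>
        intro r x y hy hr h
        have hy0 : y = 0 := by omega
        subst hy0
        rcases (hP1 r x).mp h with ⟨_, hdvd⟩ | ⟨hr2, _⟩
        · exact dvd_congr' hdvd (by ring)
        · rcases hr with rfl|rfl <;> rcases hr2 with h2|h2 <;> omega
      | succ n ih =>
        intro r x y hy hr h
        rcases eq_or_ne y 0 with rfl | hy0
        · rcases (hP1 r x).mp h with ⟨_, hdvd⟩ | ⟨hr2, _⟩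
          · exact dvd_congr' hdvd (by ring)
          · rcases hr with rfl|rfl <;> rcases hr2 with h2|h2 <;> omega
        · obtain ⟨s, hs, hsy⟩ := signchoice y hy0
          have hms : T (-s) x y := getms r x y s hr hs h
          have hnew := hdesc s x y hs hms
          have habs : (y - s).natAbs ≤ n := by
            rcases hsy with ⟨h0, rfl⟩|⟨h0, rfl⟩ <;> omega
          exact dvd_congr' (ih s (x - s*x₀) (y - s) habs hs hnew) (by ring)
    have W : ∀ r x y, T r x y → k ∣ x - y * x₀ := by
      intro r x y h
      rcases hrange r x y h with rfl | rfl | rfl | rfl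
      · exact Wshort y.natAbs 1 x y le_rfl (Or.inl rfl) h
      · exact Wshort y.natAbs (-1) x y le_rfl (Or.inr rfl) h
      · have h2 : T (-1) (-x) (-y) :=
          T_congr (hshort 1 x y (Or.inl rfl) (T_congr h (by ring) rfl rfl)) rfl (by ring) (by ring)
        have key := Wshort (-y).natAbs (-1) (-x) (-y) le_rfl (Or.inr rfl) h2
        exact dvd_congr' (dvd_neg.mpr key) (by ring)
      · have h2 : T (-1) x y :=
          T_congr (hshort (-1) x y (Or.inr rfl) (T_congr h (by ring) rfl rfl)) rfl (by ring) (by ring)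
        exact Wshort y.natAbs (-1) x y le_rfl (Or.inr rfl) h2
    have hk1 : k = 1 := hprim k hk W
    subst hk1
    have hg₀ : g₀ = false := by
      cases hg : g₀
      · rfl
      · exfalso
        have : T (2 * (1 * (-2))) (2*1*x₀ + 1*k₀) (2*1) :=
          (hP0l 1 (2*1*x₀ + 1*k₀) (Or.inl rfl)).mpr ⟨hg, 1, odd_one, rfl⟩
        have hr := hrange _ _ _ this
        omega
    have hk₀4 : k₀ ∣ 4 := by
      have u1 : T 2 x₀ 1 := T_congr (hflip (-2) x₀ 1 hα₀) (by ring) rfl rfl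
      have v : T (-2) (x₀ - 4) 1 :=
        T_congr (hrefl 2 x₀ 1 1 1 0 4 u1 hγk (by ring)) rfl (by ring) (by ring)
      have := (hP0s1 (x₀ - 4)).mp v
      exact dvd_congr' (dvd_neg.mpr this) (by ring)
    have hg₁k : g₁ = true → k₀ ∣ 2 := by
      intro hg
      have δ : T 2 1 0 := (hP1 2 1).mpr (Or.inr ⟨Or.inl rfl, hg, 1, odd_one, by ring⟩)
      have v : T 2 (x₀ + 2) 1 :=
        T_congr (hrefl (-2) x₀ 1 2 1 0 (-2) hα₀ δ (by ring)) (by ring) (by ring) (by ring)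
      have v2 : T (-2) (x₀ + 2) 1 := T_congr (hflip 2 (x₀+2) 1 v) rfl rfl rfl
      have := (hP0s1 (x₀ + 2)).mp v2
      exact dvd_congr' this (by ring)
    refine ⟨rfl, ?_⟩
    have hle4 : k₀ ≤ 4 := Int.le_of_dvd (by norm_num) hk₀4
    interval_cases k₀
    · exact Or.inr (Or.inr (Or.inl ⟨rfl, hg₀, Or.inl rfl⟩))
    · exact Or.inr (Or.inr (Or.inl ⟨rfl, hg₀, Or.inr rfl⟩))
    · exact absurd hk₀4 (by decide)
    · refine Or.inr (Or.inr (Or.inr ⟨rfl, hg₀, rfl, ?_⟩))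
      cases hg : g₁
      · rfl
      · exfalso; have := hg₁k hg; omega


set_option maxHeartbeats 2000000 in
/-- Classification of `((α₀^∨,α₁), k(α₀), g(α₀), g(α₁))` for a reduced
elliptic root system of rank `1` with fundamental-set `{α₁, α₀} ∪ {a}`
(`false` encodes `∅` and `true` encodes `2ℤ+1`). -/
theorem stmt12 {V : Type*} [AddCommGroup V] [Module ℝ V]
    (B : LinearMap.BilinForm ℝ V) (R : Set V)
    (hE : IsEARS B R 1 2) (hred : IsReducedRS R)
    (α₀ α₁ : V) (a : V) (hne : α₁ ≠ α₀)
    (hfs : IsFundamentalSet B R 1 {α₁, α₀} a)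
    (k : V → ℕ) (g : V → Bool) (hkg : IsKG R a {α₁, α₀} k g)
    -- `{π(α₁)}` is a base of the irreducible finite root system `π(R)`
    (hbase1 : IsBaseSet ((LinearMap.ker B).mkQ '' R) {(LinearMap.ker B).mkQ α₁} 1)
    -- if `{π(α₀)}` is also a base of `π(R)` then `k(α₁) ≤ k(α₀)`
    (hmin : IsBaseSet ((LinearMap.ker B).mkQ '' R) {(LinearMap.ker B).mkQ α₀} 1 →
      k α₁ ≤ k α₀) :
    k α₁ = 1 ∧
      ((2 * B α₀ α₁ = -(2 : ℝ) * B α₀ α₀ ∧ k α₀ = 1 ∧ g α₀ = false ∧ g α₁ = false) ∨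
       (2 * B α₀ α₁ = -(2 : ℝ) * B α₀ α₀ ∧ k α₀ = 1 ∧ g α₀ = false ∧ g α₁ = true) ∨
       (2 * B α₀ α₁ = -(2 : ℝ) * B α₀ α₀ ∧ k α₀ = 1 ∧ g α₀ = true ∧ g α₁ = false) ∨
       (2 * B α₀ α₁ = -(2 : ℝ) * B α₀ α₀ ∧ k α₀ = 1 ∧ g α₀ = true ∧ g α₁ = true) ∨
       (2 * B α₀ α₁ = -(2 : ℝ) * B α₀ α₀ ∧ k α₀ = 2 ∧ g α₀ = false ∧ g α₁ = false) ∨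
       (2 * B α₀ α₁ = -(2 : ℝ) * B α₀ α₀ ∧ k α₀ = 2 ∧ g α₀ = true ∧ g α₁ = false) ∨
       (2 * B α₀ α₁ = -(1 : ℝ) * B α₀ α₀ ∧ k α₀ = 1 ∧ g α₀ = false ∧ g α₁ = false) ∨
       (2 * B α₀ α₁ = -(1 : ℝ) * B α₀ α₀ ∧ k α₀ = 1 ∧ g α₀ = false ∧ g α₁ = true) ∨
       (2 * B α₀ α₁ = -(1 : ℝ) * B α₀ α₀ ∧ k α₀ = 2 ∧ g α₀ = false ∧ g α₁ = false) ∨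
       (2 * B α₀ α₁ = -(1 : ℝ) * B α₀ α₀ ∧ k α₀ = 2 ∧ g α₀ = false ∧ g α₁ = true) ∨
       (2 * B α₀ α₁ = -(1 : ℝ) * B α₀ α₀ ∧ k α₀ = 4 ∧ g α₀ = false ∧ g α₁ = false)) := by
  classical
  obtain ⟨haz, haa, ⟨b, hbz, hbb, hnull, hab⟩, hPsub, hPfin, hPcard, hbase⟩ := hfs
  haveI : FiniteDimensional ℝ V := hE.findim
  have hα₁R : α₁ ∈ R := hPsub (Set.mem_insert _ _)
  have hα₀R : α₀ ∈ R := hPsub (Set.mem_insert_of_mem _ rfl)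
  have hc0 : B α₁ α₁ ≠ 0 := hE.root_nonisotropic α₁ hα₁R
  -- kernel comparison
  have hker_le : LinearMap.ker B ≤ LinearMap.ker (B α₁) := by
    intro v hv
    rw [LinearMap.mem_ker] at hv ⊢
    rw [hE.symm α₁ v, hv]
    rfl
  have hdim : Module.finrank ℝ V = 3 := hE.dim_eq
  have hn2 : Module.finrank ℝ (LinearMap.ker B) = 2 := hE.dim_null
  have hker1top : LinearMap.ker (B α₁) ≠ ⊤ := by
    intro h
    have hmem : α₁ ∈ LinearMap.ker (B α₁) := by rw [h]; trivial
    exact hc0 (LinearMap.mem_ker.mp hmem)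
  have hker1le : Module.finrank ℝ (LinearMap.ker (B α₁)) ≤ 2 := by
    by_contra hgt
    push_neg at hgt
    apply hker1top
    apply Submodule.eq_top_of_finrank_eq
    have hle := Submodule.finrank_le (LinearMap.ker (B α₁))
    omega
  have hkereq : LinearMap.ker B = LinearMap.ker (B α₁) :=
    Submodule.eq_of_le_of_finrank_le hker_le (by rw [hn2]; exact hker1le)
  have hker_fun : ∀ v : V, B α₁ v = 0 → B v = 0 := by
    intro v hv
    have h1 : v ∈ LinearMap.ker (B α₁) := LinearMap.mem_ker.mpr hv
    rw [← hkereq] at h1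
    exact LinearMap.mem_ker.mp h1
  -- factorized form
  have hform : ∀ u v : V, B u v = B α₁ u * B α₁ v / (B α₁ α₁) := by
    intro u v
    have h1 : B α₁ (u - (B α₁ u / B α₁ α₁) • α₁) = 0 := by
      rw [map_sub, map_smul]
      simp only [smul_eq_mul]
      field_simp
      ring
    have h2 := hker_fun _ h1
    have h4 : B u v - (B α₁ u / B α₁ α₁) * B α₁ v = 0 := by
      have h3 : B (u - (B α₁ u / B α₁ α₁) • α₁) v = 0 := by rw [h2]; rfl
      simpa [map_sub, map_smul, LinearMap.sub_apply, LinearMap.smul_apply, smul_eq_mul]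
        using h3
    have h5 : B u v = (B α₁ u / B α₁ α₁) * B α₁ v := by linarith
    rw [h5]; ring
  have hBa : B α₁ a = 0 := by
    have ha : a ∈ nullSet B := haa
    rw [hE.null_eq] at ha
    have h1 : B a = 0 := LinearMap.mem_ker.mp ha
    rw [hE.symm α₁ a, h1]
    rfl
  have hBb : B α₁ b = 0 := by
    have hb' : b ∈ nullSet B := hbb
    rw [hE.null_eq] at hb'
    have h1 : B b = 0 := LinearMap.mem_ker.mp hb'
    rw [hE.symm α₁ b, h1]
    rfl
  have hBv3 : ∀ r x y : ℤ, B α₁ (v3 α₁ a b r x y) = r * B α₁ α₁ := by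
    intro r x y
    simp only [v3, map_add, map_smul, smul_eq_mul, hBa, hBb]
    ring
  -- integral ratios of roots
  have hπα₁ne : (LinearMap.ker B).mkQ α₁ ≠ 0 := by
    intro h
    rw [Submodule.mkQ_apply, Submodule.Quotient.mk_eq_zero] at h
    apply hc0
    rw [LinearMap.mem_ker.mp h]
    rfl
  obtain ⟨hb1sub, hb1fin, hb1card, hb1li, hb1eq⟩ := hbase1
  have hrho : ∀ β ∈ R, ∃ ρ : ℤ, (ρ = 1 ∨ ρ = -1 ∨ ρ = 2 ∨ ρ = -2) ∧
      B α₁ β = ρ * B α₁ α₁ := by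
    intro β hβ
    have hu0 : B α₁ β ≠ 0 := by
      intro h
      exact hE.root_nonisotropic β hβ (by rw [hform β β, h]; simp)
    have hkerm : β - (B α₁ β / B α₁ α₁) • α₁ ∈ LinearMap.ker B := by
      rw [hkereq, LinearMap.mem_ker]
      rw [map_sub, map_smul]
      simp only [smul_eq_mul]
      field_simp
      ring
    have hπ : (LinearMap.ker B).mkQ β
        = (B α₁ β / B α₁ α₁) • (LinearMap.ker B).mkQ α₁ := by
      rw [← map_smul, Submodule.mkQ_apply, Submodule.mkQ_apply, Submodule.Quotient.eq]
      exact hkerm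
    have hmem : (LinearMap.ker B).mkQ β ∈ (LinearMap.ker B).mkQ '' R := ⟨β, hβ, rfl⟩
    rw [hb1eq] at hmem
    have hratio : ∃ ρ : ℤ, ρ ≠ 0 ∧ B α₁ β = ρ * B α₁ α₁ := by
      rcases hmem with ⟨-, hmem⟩ | ⟨-, hmem⟩
      · have hmem' : (LinearMap.ker B).mkQ β
            ∈ AddSubmonoid.closure {(LinearMap.ker B).mkQ α₁} := hmem
        obtain ⟨n, hn⟩ := AddSubmonoid.mem_closure_singleton.mp hmem'
        have h0 : ((n : ℝ) - B α₁ β / B α₁ α₁) • (LinearMap.ker B).mkQ α₁ = 0 := by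
          rw [sub_smul, Nat.cast_smul_eq_nsmul, hn, hπ, sub_self]
        rcases smul_eq_zero.mp h0 with h1 | h1
        · have h2 : (n:ℝ) = B α₁ β / B α₁ α₁ := by linarith
          rw [eq_div_iff hc0] at h2
          refine ⟨(n:ℤ), ?_, by push_cast; linear_combination -h2⟩
          intro hn0
          have hn0' : (n:ℕ) = 0 := by omega
          apply hu0
          rw [← h2, hn0']
          simp
        · exact absurd h1 hπα₁ne
      · have hmem' : -((LinearMap.ker B).mkQ β)
            ∈ AddSubmonoid.closure {(LinearMap.ker B).mkQ α₁} := Set.mem_neg.mp hmem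
        obtain ⟨n, hn⟩ := AddSubmonoid.mem_closure_singleton.mp hmem'
        have h0 : ((n : ℝ) + B α₁ β / B α₁ α₁) • (LinearMap.ker B).mkQ α₁ = 0 := by
          rw [add_smul, Nat.cast_smul_eq_nsmul, hn, hπ, neg_add_cancel]
        rcases smul_eq_zero.mp h0 with h1 | h1
        · have h2 : -(n:ℝ) = B α₁ β / B α₁ α₁ := by linarith
          rw [eq_div_iff hc0] at h2
          refine ⟨-(n:ℤ), ?_, by push_cast; linear_combination -h2⟩
          intro hn0
          have hn0' : (n:ℕ) = 0 := by omega
          apply hu0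
          rw [← h2, hn0']
          simp
        · exact absurd h1 hπα₁ne
    obtain ⟨ρ, hρ0, hρv⟩ := hratio
    obtain ⟨m', hm'⟩ := hE.integral β hβ α₁ hα₁R
    have hββ : B β β = (ρ:ℝ) * (ρ:ℝ) * B α₁ α₁ := by
      rw [hform β β, hρv]
      field_simp
    have hβα₁ : B β α₁ = (ρ:ℝ) * B α₁ α₁ := by rw [hE.symm β α₁, hρv]
    rw [hβα₁, hββ] at hm'
    have hρr : (ρ:ℝ) ≠ 0 := Int.cast_ne_zero.mpr hρ0
    have h5 : ((m':ℝ) * ρ) * ((ρ:ℝ) * B α₁ α₁) = 2 * ((ρ:ℝ) * B α₁ α₁) := by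
      linear_combination -hm'
    have hc2 : (m':ℝ) * ρ = 2 :=
      mul_right_cancel₀ (mul_ne_zero hρr hc0) h5
    have hc2' : m' * ρ = 2 := by exact_mod_cast hc2
    have hdvd : ρ ∣ 2 := Dvd.intro_left m' hc2'
    have h2 : ρ.natAbs ∣ 2 := by
      have := Int.natAbs_dvd_natAbs.mpr hdvd
      simpa using this
    have h3 := Nat.le_of_dvd (by norm_num) h2
    have h4 : ρ.natAbs ≠ 0 := by simpa using hρ0
    exact ⟨ρ, by omega, hρv⟩
  -- integral decomposition of roots
  have hdecomp : ∀ β ∈ R, ∃ r x y : ℤ, (r = 1 ∨ r = -1 ∨ r = 2 ∨ r = -2) ∧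
      β = v3 α₁ a b r x y := by
    intro β hβ
    obtain ⟨ρ, hρmem, hρv⟩ := hrho β hβ
    have hz : β - ρ • α₁ ∈ zspan R :=
      sub_mem (AddSubgroup.subset_closure hβ)
        (zsmul_mem (AddSubgroup.subset_closure hα₁R) ρ)
    have hnl : β - ρ • α₁ ∈ nullSet B := by
      show B (β - ρ • α₁) (β - ρ • α₁) = 0
      have h1 : B α₁ (β - ρ • α₁) = 0 := by
        rw [map_sub, map_zsmul, hρv, zsmul_eq_mul]
        ring
      rw [hform, h1]
      simp
    have hmem2 : β - ρ • α₁ ∈ (zspan R : Set V) ∩ nullSet B := ⟨hz, hnl⟩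
    rw [hnull] at hmem2
    obtain ⟨m, n, hmn⟩ := hmem2
    refine ⟨ρ, m, n, hρmem, ?_⟩
    have hβeq : β = ρ • α₁ + (m • a + n • b) := by rw [← hmn]; abel
    rw [hβeq]
    simp only [v3, Int.cast_smul_eq_zsmul]
    abel
  -- linear independence of α₁, a, b
  have hRsub : R ⊆ (Submodule.span ℝ {α₁, a, b} : Set V) := by
    intro β hβ
    obtain ⟨r, x, y, -, rfl⟩ := hdecomp β hβ
    show (r:ℝ) • α₁ + (x:ℝ) • a + (y:ℝ) • b ∈ Submodule.span ℝ {α₁, a, b}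
    refine Submodule.add_mem _ (Submodule.add_mem _ ?_ ?_) ?_ <;>
      exact Submodule.smul_mem _ _ (Submodule.subset_span (by simp))
  have hspan_top : Submodule.span ℝ {α₁, a, b} = ⊤ := by
    rw [eq_top_iff, ← hE.span_eq_top]
    exact Submodule.span_le.mpr hRsub
  have hrange_eq : Set.range ![α₁, a, b] = {α₁, a, b} := by
    ext v
    constructor
    · rintro ⟨i, rfl⟩
      fin_cases i <;> simp
    · intro hv
      rcases hv with rfl | rfl | rfl
      exacts [⟨0, rfl⟩, ⟨1, rfl⟩, ⟨2, rfl⟩]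
  have hli3 : LinearIndependent ℝ ![α₁, a, b] := by
    apply linearIndependent_of_top_le_span_of_card_eq_finrank
    · rw [hrange_eq, hspan_top]
    · simp [hdim]
  have hind : ∀ p q s : ℝ, p • α₁ + q • a + s • b = 0 → p = 0 ∧ q = 0 ∧ s = 0 := by
    intro p q s h
    have h2 := Fintype.linearIndependent_iff.mp hli3 ![p, q, s] (by
      rw [Fin.sum_univ_three]
      simpa using h)
    exact ⟨h2 0, h2 1, h2 2⟩
  have hinj : ∀ r x y r' x' y' : ℤ, v3 α₁ a b r x y = v3 α₁ a b r' x' y' →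
      r = r' ∧ x = x' ∧ y = y' := by
    intro r x y r' x' y' h
    have h0 : ((r:ℝ) - r') • α₁ + ((x:ℝ) - x') • a + ((y:ℝ) - y') • b = 0 := by
      calc ((r:ℝ) - r') • α₁ + ((x:ℝ) - x') • a + ((y:ℝ) - y') • b
          = v3 α₁ a b r x y - v3 α₁ a b r' x' y' := by simp only [v3]; module
        _ = 0 := sub_eq_zero.mpr h
    obtain ⟨e1, e2, e3⟩ := hind _ _ _ h0
    refine ⟨?_, ?_, ?_⟩
    · have : (r:ℝ) = r' := by linarith
      exact_mod_cast this
    · have : (x:ℝ) = x' := by linarith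
      exact_mod_cast this
    · have : (y:ℝ) = y' := by linarith
      exact_mod_cast this
  -- reflection closure at the level of integer triples
  have hreflV : ∀ r x y r' x' y' t : ℤ, v3 α₁ a b r x y ∈ R → v3 α₁ a b r' x' y' ∈ R →
      t * r' = 2 * r → v3 α₁ a b (-r) (x - t*x') (y - t*y') ∈ R := by
    intro r x y r' x' y' t hβ hγ ht
    have hr'0 : r' ≠ 0 := by
      obtain ⟨ρ, hρmem, hρv⟩ := hrho _ hγ
      rw [hBv3] at hρv
      have : (r' : ℝ) = (ρ : ℝ) := mul_right_cancel₀ hc0 hρv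
      have : r' = ρ := by exact_mod_cast this
      omega
    have hr'r : (r' : ℝ) ≠ 0 := Int.cast_ne_zero.mpr hr'0
    have hone : srefl B (v3 α₁ a b r' x' y') (v3 α₁ a b r x y) ∈ R := by
      rw [← hE.reflect _ hγ]
      exact Set.mem_image_of_mem _ hβ
    have e1 : B (v3 α₁ a b r' x' y') (v3 α₁ a b r' x' y') = (r':ℝ) * r' * B α₁ α₁ := by
      rw [hform, hBv3]
      field_simp
    have e2 : B (v3 α₁ a b r' x' y') (v3 α₁ a b r x y) = (r':ℝ) * r * B α₁ α₁ := by
      rw [hform, hBv3, hBv3]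
      field_simp
    have htr : (t:ℝ) * r' = 2 * r := by exact_mod_cast ht
    have hscal : 2 * (B (v3 α₁ a b r' x' y') (v3 α₁ a b r' x' y'))⁻¹
        * B (v3 α₁ a b r' x' y') (v3 α₁ a b r x y) = (t:ℝ) := by
      rw [e1, e2]
      field_simp
      linear_combination (-1:ℝ) * htr
    have hval : srefl B (v3 α₁ a b r' x' y') (v3 α₁ a b r x y)
        = v3 α₁ a b (-r) (x - t*x') (y - t*y') := by
      have hunf : srefl B (v3 α₁ a b r' x' y') (v3 α₁ a b r x y)
          = v3 α₁ a b r x y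
            - (2 * (B (v3 α₁ a b r' x' y') (v3 α₁ a b r' x' y'))⁻¹
              * B (v3 α₁ a b r' x' y') (v3 α₁ a b r x y)) • (v3 α₁ a b r' x' y') := by
        simp only [srefl, LinearMap.sub_apply, LinearMap.id_apply, LinearMap.smulRight_apply,
          LinearMap.smul_apply, smul_eq_mul]
      rw [hunf, hscal]
      have hrt : -r = r - t * r' := by omega
      rw [hrt]
      simp only [v3]
      push_cast
      module
    rw [← hval]
    exact hone
  -- decomposition of α₀ and base representation in V/ℝa
  obtain ⟨r₀, x₀, y₀, hr₀mem, hα₀eq⟩ := hdecomp α₀ hα₀R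
  have hα₀mem : v3 α₁ a b r₀ x₀ y₀ ∈ R := hα₀eq ▸ hα₀R
  have hα₁v3 : α₁ = v3 α₁ a b 1 0 0 := by simp [v3]
  have hα₁mem : v3 α₁ a b 1 0 0 ∈ R := hα₁v3 ▸ hα₁R
  obtain ⟨hbsub, hbfin, hbcard, hbli, hbeq⟩ := hbase
  have hqpair : (Submodule.span ℝ {a}).mkQ '' {α₁, α₀}
      = {(Submodule.span ℝ {a}).mkQ α₁, (Submodule.span ℝ {a}).mkQ α₀} :=
    Set.image_pair _ _ _
  rw [hqpair] at hbcard hbli hbeq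
  have hqa : (Submodule.span ℝ {a}).mkQ a = 0 := by
    rw [Submodule.mkQ_apply, Submodule.Quotient.mk_eq_zero]
    exact Submodule.subset_span rfl
  have hqne : (Submodule.span ℝ {a}).mkQ α₁ ≠ (Submodule.span ℝ {a}).mkQ α₀ := by
    intro h
    rw [show ({(Submodule.span ℝ {a}).mkQ α₁, (Submodule.span ℝ {a}).mkQ α₀} : Set _)
        = {(Submodule.span ℝ {a}).mkQ α₀} by rw [h]; simp] at hbcard
    simp at hbcard
  have hpairind : ∀ p q : ℝ, p • (Submodule.span ℝ {a}).mkQ α₁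
      + q • (Submodule.span ℝ {a}).mkQ α₀ = 0 → p = 0 ∧ q = 0 :=
    fun p q hpq => pair_indep hbli (by simp) (by simp) hqne p q hpq
  have hqrep : ∀ β ∈ R, ∃ (s : ℤ) (m n : ℕ) (t : ℝ), (s = 1 ∨ s = -1) ∧
      (s:ℝ) • β = (m:ℝ) • α₁ + (n:ℝ) • α₀ + t • a := by
    intro β hβ
    have hmem : (Submodule.span ℝ {a}).mkQ β ∈ (Submodule.span ℝ {a}).mkQ '' R :=
      ⟨β, hβ, rfl⟩
    rw [hbeq] at hmem
    rcases hmem with ⟨-, hmem⟩ | ⟨-, hmem⟩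
    · have hmem' : (Submodule.span ℝ {a}).mkQ β ∈ AddSubmonoid.closure
          {(Submodule.span ℝ {a}).mkQ α₁, (Submodule.span ℝ {a}).mkQ α₀} := hmem
      obtain ⟨m, n, hmn⟩ := (AddSubmonoid.mem_closure_pair _ _ _).mp hmem'
      have hq2 : (Submodule.span ℝ {a}).mkQ ((m:ℝ) • α₁ + (n:ℝ) • α₀)
          = (Submodule.span ℝ {a}).mkQ β := by
        rw [map_add, map_smul, map_smul, Nat.cast_smul_eq_nsmul, Nat.cast_smul_eq_nsmul]
        exact hmn
      rw [Submodule.mkQ_apply, Submodule.mkQ_apply, Submodule.Quotient.eq] at hq2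
      obtain ⟨t, ht⟩ := Submodule.mem_span_singleton.mp hq2
      refine ⟨1, m, n, -t, Or.inl rfl, ?_⟩
      have : β = (m:ℝ) • α₁ + (n:ℝ) • α₀ + (-t) • a := by
        have h9 : (m:ℝ) • α₁ + (n:ℝ) • α₀ - β = t • a := ht.symm
        have h10 : β = ((m:ℝ) • α₁ + (n:ℝ) • α₀) - t • a := by
          rw [← h9]; abel
        rw [h10]; module
      rw [this]; module
    · have hmem' : -((Submodule.span ℝ {a}).mkQ β) ∈ AddSubmonoid.closure
          {(Submodule.span ℝ {a}).mkQ α₁, (Submodule.span ℝ {a}).mkQ α₀} :=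
        Set.mem_neg.mp hmem
      obtain ⟨m, n, hmn⟩ := (AddSubmonoid.mem_closure_pair _ _ _).mp hmem'
      have hq2 : (Submodule.span ℝ {a}).mkQ ((m:ℝ) • α₁ + (n:ℝ) • α₀)
          = (Submodule.span ℝ {a}).mkQ (-β) := by
        rw [map_add, map_smul, map_smul, Nat.cast_smul_eq_nsmul, Nat.cast_smul_eq_nsmul,
          map_neg]
        exact hmn
      rw [Submodule.mkQ_apply, Submodule.mkQ_apply, Submodule.Quotient.eq] at hq2
      obtain ⟨t, ht⟩ := Submodule.mem_span_singleton.mp hq2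
      refine ⟨-1, m, n, -t, Or.inr rfl, ?_⟩
      have : -β = (m:ℝ) • α₁ + (n:ℝ) • α₀ + (-t) • a := by
        have h9 : (m:ℝ) • α₁ + (n:ℝ) • α₀ - (-β) = t • a := ht.symm
        have h10 : -β = ((m:ℝ) • α₁ + (n:ℝ) • α₀) - t • a := by
          rw [← h9]; abel
        rw [h10]; module
      rw [← this]; module
  -- coefficient extraction for base representations
  have hcoeff : ∀ (rr xx yy s : ℤ) (m n : ℕ) (t : ℝ),
      (s:ℝ) • (v3 α₁ a b rr xx yy) = (m:ℝ) • α₁ + (n:ℝ) • α₀ + t • a →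
      s*rr = (m:ℤ) + (n:ℤ)*r₀ ∧ s*yy = (n:ℤ)*y₀ := by
    intro rr xx yy s m n t hrep
    rw [hα₀eq] at hrep
    have h0 : (((s*rr:ℤ):ℝ) - ((m:ℝ) + (n:ℝ)*((r₀:ℤ):ℝ))) • α₁
        + ((((s*xx:ℤ)):ℝ) - ((n:ℝ)*((x₀:ℤ):ℝ) + t)) • a
        + ((((s*yy:ℤ)):ℝ) - (n:ℝ)*((y₀:ℤ):ℝ)) • b = 0 := by
      calc (((s*rr:ℤ):ℝ) - ((m:ℝ) + (n:ℝ)*((r₀:ℤ):ℝ))) • α₁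
            + ((((s*xx:ℤ)):ℝ) - ((n:ℝ)*((x₀:ℤ):ℝ) + t)) • a
            + ((((s*yy:ℤ)):ℝ) - (n:ℝ)*((y₀:ℤ):ℝ)) • b
          = (s:ℝ) • (v3 α₁ a b rr xx yy)
            - ((m:ℝ) • α₁ + (n:ℝ) • (v3 α₁ a b r₀ x₀ y₀) + t • a) := by
            simp only [v3]; push_cast; module
        _ = 0 := sub_eq_zero.mpr hrep
    obtain ⟨e1, e2, e3⟩ := hind _ _ _ h0
    constructor
    · have : ((s*rr:ℤ):ℝ) = (m:ℝ) + (n:ℝ)*((r₀:ℤ):ℝ) := by linarith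
      exact_mod_cast this
    · have : ((s*yy:ℤ):ℝ) = (n:ℝ)*((y₀:ℤ):ℝ) := by linarith
      exact_mod_cast this
  -- y₀ ≠ 0
  have hy₀ne : y₀ ≠ 0 := by
    intro h0
    have hqα₀ : (Submodule.span ℝ {a}).mkQ α₀ = ((r₀:ℤ):ℝ) • (Submodule.span ℝ {a}).mkQ α₁ := by
      have hsub : α₀ - ((r₀:ℤ):ℝ) • α₁ ∈ Submodule.span ℝ {a} := by
        rw [hα₀eq, h0]
        have he : v3 α₁ a b r₀ x₀ 0 - ((r₀:ℤ):ℝ) • α₁ = ((x₀:ℤ):ℝ) • a := by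
          simp only [v3]; push_cast; module
        rw [he]
        exact Submodule.smul_mem _ _ (Submodule.subset_span rfl)
      have hq0 : (Submodule.span ℝ {a}).mkQ (α₀ - ((r₀:ℤ):ℝ) • α₁) = 0 := by
        rw [Submodule.mkQ_apply, Submodule.Quotient.mk_eq_zero]
        exact hsub
      rw [map_sub, map_smul] at hq0
      exact (sub_eq_zero.mp hq0)
    have h9 : ((r₀:ℤ):ℝ) • (Submodule.span ℝ {a}).mkQ α₁
        + (-1 : ℝ) • (Submodule.span ℝ {a}).mkQ α₀ = 0 := by
      rw [hqα₀]; module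
    have := (hpairind _ _ h9).2
    norm_num at this
  -- r₀ is negative
  have hr₀neg : r₀ = -1 ∨ r₀ = -2 := by
    have hflipmem : v3 α₁ a b (-r₀) x₀ y₀ ∈ R := by
      have h9 := hreflV r₀ x₀ y₀ 1 0 0 (2*r₀) hα₀mem hα₁mem (by ring)
      have e1 : x₀ - 2*r₀*0 = x₀ := by ring
      have e2 : y₀ - 2*r₀*0 = y₀ := by ring
      rwa [e1, e2] at h9
    obtain ⟨s, m, n, t, hs, hrep⟩ := hqrep _ hflipmem
    obtain ⟨e1, e3⟩ := hcoeff _ _ _ _ _ _ _ hrep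
    rcases hs with rfl | rfl
    · -- s = 1 : y₀ = n y₀ → n = 1 → -r₀ = m + r₀
      have hn1 : (n:ℤ) = 1 := by
        have h9 : (1 - (n:ℤ)) * y₀ = 0 := by linarith
        rcases mul_eq_zero.mp h9 with h|h
        · omega
        · exact absurd h hy₀ne
      rw [hn1] at e1
      have hm : (m:ℤ) = -2*r₀ := by linarith
      have hmnn : (0:ℤ) ≤ m := Int.ofNat_nonneg m
      omega
    · -- s = -1 : -y₀ = n y₀ → impossible
      exfalso
      have h9 : ((n:ℤ) + 1) * y₀ = 0 := by linarith
      rcases mul_eq_zero.mp h9 with h|h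
      · have hmnn : (0:ℤ) ≤ n := Int.ofNat_nonneg n
        omega
      · exact absurd h hy₀ne
  -- every root has b-coordinate a multiple of y₀
  have hymult : ∀ r x y : ℤ, v3 α₁ a b r x y ∈ R → y₀ ∣ y := by
    intro r x y h
    obtain ⟨s, m, n, t, hs, hrep⟩ := hqrep _ h
    obtain ⟨-, e3⟩ := hcoeff _ _ _ _ _ _ _ hrep
    rcases hs with rfl | rfl
    · exact ⟨n, by linarith⟩
    · exact ⟨-n, by linarith⟩
  -- generation of the null lattice by root coordinates
  have hreach : ∀ (Q : ℤ → ℤ → Prop), Q 0 0 →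
      (∀ x y x' y', Q x y → Q x' y' → Q (x+x') (y+y')) →
      (∀ x y, Q x y → Q (-x) (-y)) →
      (∀ r x y : ℤ, v3 α₁ a b r x y ∈ R → Q x y) →
      ∀ v, v ∈ zspan R → ∃ (p x y : ℤ), Q x y ∧ v = v3 α₁ a b p x y := by
    intro Q h0 hadd hneg hroot v hv
    have hv' : v ∈ AddSubgroup.closure R := hv
    refine AddSubgroup.closure_induction ?_ ?_ ?_ ?_ hv'
    · intro β hβ
      obtain ⟨r, x, y, -, rfl⟩ := hdecomp β hβ
      exact ⟨r, x, y, hroot _ _ _ hβ, rfl⟩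
    · exact ⟨0, 0, 0, h0, (v3_zero α₁ a b).symm⟩
    · rintro u w hu hw ⟨p, x, y, hq, rfl⟩ ⟨p', x', y', hq', rfl⟩
      exact ⟨p+p', x+x', y+y', hadd _ _ _ _ hq hq', v3_add _ _ _ _ _ _ _ _ _⟩
    · rintro u hu ⟨p, x, y, hq, rfl⟩
      exact ⟨-p, -x, -y, hneg _ _ hq, v3_neg _ _ _ _ _ _⟩
  -- y₀ is a unit
  have hy₀unit : y₀ = 1 ∨ y₀ = -1 := by
    obtain ⟨p, x, y, hq, heq⟩ := hreach (fun x y => y₀ ∣ y) (dvd_zero _)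
      (fun x y x' y' h1 h2 => dvd_add h1 h2) (fun x y h1 => dvd_neg.mpr h1) hymult b hbz
    have hb2 : b = v3 α₁ a b 0 0 1 := by simp [v3]
    obtain ⟨-, -, e3⟩ := hinj p x y 0 0 1 (heq.symm.trans hb2)
    rw [e3] at hq
    rcases Int.isUnit_iff.mp (isUnit_of_dvd_one hq) with h|h
    · exact Or.inl h
    · exact Or.inr h
  have hy₀sq : y₀ * y₀ = 1 := by rcases hy₀unit with rfl|rfl <;> norm_num
  -- the planes
  have hkg1 := hkg α₁ (Set.mem_insert _ _)
  have hkg0 := hkg α₀ (Set.mem_insert_of_mem _ rfl)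
  have hk₁pos : 0 < (k α₁ : ℤ) := by exact_mod_cast hkg1.1
  have hk₀pos : 0 < (k α₀ : ℤ) := by exact_mod_cast hkg0.1
  have hplane1 := hkg1.2
  have hplane0 := hkg0.2
  have hr₀ne : r₀ ≠ 0 := by rcases hr₀neg with rfl|rfl <;> norm_num
  have hmemspan1 : ∀ r x : ℤ, v3 α₁ a b r x 0 ∈ (Submodule.span ℝ {α₁, a} : Set V) := by
    intro r x
    show (r:ℝ) • α₁ + (x:ℝ) • a + ((0:ℤ):ℝ) • b ∈ Submodule.span ℝ {α₁, a}
    rw [show ((0:ℤ):ℝ) = 0 by norm_num, zero_smul, add_zero]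
    exact Submodule.add_mem _
      (Submodule.smul_mem _ _ (Submodule.subset_span (by simp)))
      (Submodule.smul_mem _ _ (Submodule.subset_span (by simp)))
  have hcomb : ∀ ε t : ℤ, (ε • α₀ + t • a : V) = v3 α₁ a b (ε*r₀) (ε*x₀ + t) (ε*y₀) := by
    intro ε t
    rw [hα₀eq]
    exact v3_smul_comb α₁ a b r₀ x₀ y₀ ε t
  have hmemspan0 : ∀ ε t : ℤ, v3 α₁ a b (ε*r₀) (ε*x₀ + t) (ε*y₀)
      ∈ (Submodule.span ℝ {α₀, a} : Set V) := by
    intro ε t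
    rw [← hcomb]
    have h1 : (ε • α₀ + t • a : V) = ((ε:ℤ):ℝ) • α₀ + ((t:ℤ):ℝ) • a := by
      rw [Int.cast_smul_eq_zsmul, Int.cast_smul_eq_zsmul]
    rw [h1]
    exact Submodule.add_mem _
      (Submodule.smul_mem _ _ (Submodule.subset_span (by simp)))
      (Submodule.smul_mem _ _ (Submodule.subset_span (by simp)))
  have hline : ∀ ε t : ℤ, (ε • α₁ + t • a : V) = v3 α₁ a b ε t 0 := by
    intro ε t
    have h9 := v3_smul_comb α₁ a b 1 0 0 ε t
    rw [← hα₁v3] at h9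
    simpa using h9
  have hP1V : ∀ r x : ℤ, (v3 α₁ a b r x 0 ∈ R) ↔
      ((r = 1 ∨ r = -1) ∧ (k α₁:ℤ) ∣ x) ∨
      ((r = 2 ∨ r = -2) ∧ g α₁ = true ∧ ∃ m, Odd m ∧ x = m * (k α₁:ℤ)) := by
    intro r x
    constructor
    · intro h
      have hmem : v3 α₁ a b r x 0 ∈ R ∩ (Submodule.span ℝ {α₁, a} : Set V) :=
        ⟨h, hmemspan1 r x⟩
      rw [hplane1] at hmem
      rcases hmem with ⟨ε, m, hε, heq⟩ | ⟨hg, ε, m, hε, hodd, heq⟩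
      · rw [hline ε (m * ((k α₁ : ℕ):ℤ))] at heq
        obtain ⟨e1, e2, -⟩ := hinj _ _ _ _ _ _ heq
        exact Or.inl ⟨by omega, ⟨m, by rw [e2]; ring⟩⟩
      · rw [hline (2*ε) (m * ((k α₁ : ℕ):ℤ))] at heq
        obtain ⟨e1, e2, -⟩ := hinj _ _ _ _ _ _ heq
        exact Or.inr ⟨by omega, hg, m, hodd, e2⟩
    · rintro (⟨hr, ⟨m, hm⟩⟩ | ⟨hr, hg, m, hodd, hm⟩)
      · have hmem : v3 α₁ a b r x 0 ∈ kgLine a α₁ (k α₁) (g α₁) := by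
          left
          refine ⟨r, m, hr, ?_⟩
          rw [hline r (m * ((k α₁ : ℕ):ℤ))]
          rw [show x = m*((k α₁ : ℕ):ℤ) from by rw [hm]; ring]
        have hmem2 : v3 α₁ a b r x 0 ∈ R ∩ (Submodule.span ℝ {α₁, a} : Set V) := by
          rw [hplane1]; exact hmem
        exact hmem2.1
      · have hmem : v3 α₁ a b r x 0 ∈ kgLine a α₁ (k α₁) (g α₁) := by
          right
          refine ⟨hg, r / 2, m, ?_, hodd, ?_⟩
          · rcases hr with rfl|rfl
            · left; rfl
            · right; rfl
          · rw [hline (2*(r/2)) (m * ((k α₁ : ℕ):ℤ))]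
            rw [show x = m*((k α₁ : ℕ):ℤ) from hm]
            rw [show (2*(r/2) : ℤ) = r from by rcases hr with rfl|rfl <;> norm_num]
        have hmem2 : v3 α₁ a b r x 0 ∈ R ∩ (Submodule.span ℝ {α₁, a} : Set V) := by
          rw [hplane1]; exact hmem
        exact hmem2.1
  have hP0sV : ∀ ε x : ℤ, (ε = 1 ∨ ε = -1) →
      ((v3 α₁ a b (ε*r₀) x (ε*y₀) ∈ R) ↔ (k α₀:ℤ) ∣ x - ε*x₀) := by
    intro ε x hε
    constructor
    · intro h
      have hx : v3 α₁ a b (ε*r₀) (ε*x₀ + (x - ε*x₀)) (ε*y₀) = v3 α₁ a b (ε*r₀) x (ε*y₀) := by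
        rw [show ε*x₀ + (x - ε*x₀) = x from by ring]
      have hmem : v3 α₁ a b (ε*r₀) x (ε*y₀) ∈ R ∩ (Submodule.span ℝ {α₀, a} : Set V) :=
        ⟨h, hx ▸ hmemspan0 ε (x - ε*x₀)⟩
      rw [hplane0] at hmem
      rcases hmem with ⟨ε', m, hε', heq⟩ | ⟨hg, ε', m, hε', hodd, heq⟩
      · rw [hcomb ε' (m * ((k α₀ : ℕ):ℤ))] at heq
        obtain ⟨e1, e2, -⟩ := hinj _ _ _ _ _ _ heq
        have hee : ε = ε' := mul_right_cancel₀ hr₀ne e1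
        refine ⟨m, ?_⟩
        rw [e2, ← hee]
        ring
      · exfalso
        rw [hcomb (2*ε') (m * ((k α₀ : ℕ):ℤ))] at heq
        obtain ⟨e1, -, -⟩ := hinj _ _ _ _ _ _ heq
        have h9 : ε = 2*ε' := mul_right_cancel₀ hr₀ne e1
        rcases hε with rfl|rfl <;> rcases hε' with rfl|rfl <;> omega
    · rintro ⟨m, hm⟩
      have hmem : v3 α₁ a b (ε*r₀) x (ε*y₀) ∈ kgLine a α₀ (k α₀) (g α₀) := by
        left
        refine ⟨ε, m, hε, ?_⟩
        rw [hcomb ε (m * ((k α₀ : ℕ):ℤ))]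
        rw [show x = ε*x₀ + m*((k α₀ : ℕ):ℤ) from by
          rw [show m*((k α₀ : ℕ):ℤ) = ((k α₀ : ℕ):ℤ)*m from mul_comm _ _, ← hm]; ring]
      have hmem2 : v3 α₁ a b (ε*r₀) x (ε*y₀) ∈ R ∩ (Submodule.span ℝ {α₀, a} : Set V) := by
        rw [hplane0]; exact hmem
      exact hmem2.1
  have hP0lV : ∀ ε x : ℤ, (ε = 1 ∨ ε = -1) →
      ((v3 α₁ a b ((2*ε)*r₀) x ((2*ε)*y₀) ∈ R) ↔
        (g α₀ = true ∧ ∃ m, Odd m ∧ x = 2*ε*x₀ + m * (k α₀:ℤ))) := by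
    intro ε x hε
    constructor
    · intro h
      have hx : v3 α₁ a b ((2*ε)*r₀) ((2*ε)*x₀ + (x - (2*ε)*x₀)) ((2*ε)*y₀)
          = v3 α₁ a b ((2*ε)*r₀) x ((2*ε)*y₀) := by
        rw [show (2*ε)*x₀ + (x - (2*ε)*x₀) = x from by ring]
      have hmem : v3 α₁ a b ((2*ε)*r₀) x ((2*ε)*y₀)
          ∈ R ∩ (Submodule.span ℝ {α₀, a} : Set V) :=
        ⟨h, hx ▸ hmemspan0 (2*ε) (x - (2*ε)*x₀)⟩
      rw [hplane0] at hmem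
      rcases hmem with ⟨ε', m, hε', heq⟩ | ⟨hg, ε', m, hε', hodd, heq⟩
      · exfalso
        rw [hcomb ε' (m * ((k α₀ : ℕ):ℤ))] at heq
        obtain ⟨e1, -, -⟩ := hinj _ _ _ _ _ _ heq
        have h9 : 2*ε = ε' := mul_right_cancel₀ hr₀ne e1
        rcases hε with rfl|rfl <;> rcases hε' with rfl|rfl <;> omega
      · rw [hcomb (2*ε') (m * ((k α₀ : ℕ):ℤ))] at heq
        obtain ⟨e1, e2, -⟩ := hinj _ _ _ _ _ _ heq
        have h9 : ε = ε' := by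
          have h10 : 2*ε = 2*ε' := mul_right_cancel₀ hr₀ne e1
          omega
        refine ⟨hg, m, hodd, ?_⟩
        rw [e2, ← h9]
    · rintro ⟨hg, m, hodd, hm⟩
      have hmem : v3 α₁ a b ((2*ε)*r₀) x ((2*ε)*y₀) ∈ kgLine a α₀ (k α₀) (g α₀) := by
        right
        refine ⟨hg, ε, m, hε, hodd, ?_⟩
        rw [hcomb (2*ε) (m * ((k α₀ : ℕ):ℤ))]
        rw [show x = (2*ε)*x₀ + m*((k α₀ : ℕ):ℤ) from hm]
      have hmem2 : v3 α₁ a b ((2*ε)*r₀) x ((2*ε)*y₀)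
          ∈ R ∩ (Submodule.span ℝ {α₀, a} : Set V) := by
        rw [hplane0]; exact hmem
      exact hmem2.1
  -- wrappers for the abstract core
  have hrangeT : ∀ r x μ : ℤ, v3 α₁ a b r x (y₀*μ) ∈ R →
      (r = 1 ∨ r = -1 ∨ r = 2 ∨ r = -2) := by
    intro r x μ h
    obtain ⟨ρ, hρmem, hρv⟩ := hrho _ h
    rw [hBv3] at hρv
    have h9 : (r:ℝ) = (ρ:ℝ) := mul_right_cancel₀ hc0 hρv
    have h10 : r = ρ := by exact_mod_cast h9
    omega
  have hreflT : ∀ r x μ r' x' μ' t : ℤ, v3 α₁ a b r x (y₀*μ) ∈ R →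
      v3 α₁ a b r' x' (y₀*μ') ∈ R → t * r' = 2 * r →
      v3 α₁ a b (-r) (x - t*x') (y₀*(μ - t*μ')) ∈ R := by
    intro r x μ r' x' μ' t h1 h2 ht
    have h9 := hreflV r x (y₀*μ) r' x' (y₀*μ') t h1 h2 ht
    have e : y₀*μ - t*(y₀*μ') = y₀*(μ - t*μ') := by ring
    rwa [e] at h9
  have hP1T : ∀ r x : ℤ, (v3 α₁ a b r x (y₀*0) ∈ R) ↔
      ((r = 1 ∨ r = -1) ∧ (k α₁:ℤ) ∣ x) ∨
      ((r = 2 ∨ r = -2) ∧ g α₁ = true ∧ ∃ m, Odd m ∧ x = m * (k α₁:ℤ)) := by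
    intro r x
    rw [mul_zero]
    exact hP1V r x
  have hP0sT : ∀ ε x : ℤ, (ε = 1 ∨ ε = -1) →
      ((v3 α₁ a b (ε*r₀) x (y₀*ε) ∈ R) ↔ (k α₀:ℤ) ∣ x - ε*x₀) := by
    intro ε x hε
    rw [mul_comm y₀ ε]
    exact hP0sV ε x hε
  have hP0lT : ∀ ε x : ℤ, (ε = 1 ∨ ε = -1) →
      ((v3 α₁ a b (2*(ε*r₀)) x (y₀*(2*ε)) ∈ R) ↔
        (g α₀ = true ∧ ∃ m, Odd m ∧ x = 2*ε*x₀ + m * (k α₀:ℤ))) := by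
    intro ε x hε
    rw [show 2*(ε*r₀) = (2*ε)*r₀ from by ring, show y₀*(2*ε) = (2*ε)*y₀ from by ring]
    exact hP0lV ε x hε
  have hprimT : ∀ d : ℤ, 0 < d →
      (∀ r x μ : ℤ, v3 α₁ a b r x (y₀*μ) ∈ R → d ∣ x - μ*x₀) → d = 1 := by
    intro d hd hall
    have hroot : ∀ r x y : ℤ, v3 α₁ a b r x y ∈ R → d ∣ x - (y₀*y)*x₀ := by
      intro r x y h
      have h2 : v3 α₁ a b r x (y₀*(y₀*y)) ∈ R := by
        rw [show y₀*(y₀*y) = y from by rw [← mul_assoc, hy₀sq, one_mul]]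
        exact h
      exact hall r x (y₀*y) h2
    obtain ⟨p, x, y, hq, heq⟩ := hreach (fun x y => d ∣ x - (y₀*y)*x₀)
      (by simp)
      (fun x y x' y' h1 h2 => dvd_congr' (dvd_add h1 h2) (by ring))
      (fun x y h1 => dvd_congr' (dvd_neg.mpr h1) (by ring)) hroot a haz
    have ha2 : a = v3 α₁ a b 0 1 0 := by simp [v3]
    obtain ⟨-, e2, e3⟩ := hinj p x y 0 1 0 (heq.symm.trans ha2)
    rw [e2, e3] at hq
    have hq1 : d ∣ 1 := by
      have e : (1:ℤ) - (y₀*0)*x₀ = 1 := by ring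
      rwa [e] at hq
    rcases Int.isUnit_iff.mp (isUnit_of_dvd_one hq1) with h|h
    · exact h
    · omega
  have hmin2T : r₀ = -1 → (k α₁ : ℤ) ≤ (k α₀ : ℤ) := by
    intro hr₀
    have hsum_ker : α₀ + α₁ ∈ LinearMap.ker B := by
      rw [hkereq, LinearMap.mem_ker, map_add]
      rw [show B α₁ α₀ = ((r₀:ℤ):ℝ) * B α₁ α₁ from by rw [hα₀eq, hBv3], hr₀]
      push_cast
      ring
    have hπeq : (LinearMap.ker B).mkQ α₀ = -((LinearMap.ker B).mkQ α₁) := by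
      rw [eq_neg_iff_add_eq_zero, ← map_add, Submodule.mkQ_apply,
        Submodule.Quotient.mk_eq_zero]
      exact hsum_ker
    have hπα₀ne : (LinearMap.ker B).mkQ α₀ ≠ 0 := by
      intro h
      rw [Submodule.mkQ_apply, Submodule.Quotient.mk_eq_zero] at h
      apply hE.root_nonisotropic α₀ hα₀R
      rw [LinearMap.mem_ker.mp h]
      rfl
    have hnn : nnspan ({-((LinearMap.ker B).mkQ α₁)} : Set _)
        = -(nnspan {(LinearMap.ker B).mkQ α₁}) := by
      ext u
      constructor
      · intro hu
        obtain ⟨n, hn⟩ := AddSubmonoid.mem_closure_singleton.mp hu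
        rw [Set.mem_neg]
        exact AddSubmonoid.mem_closure_singleton.mpr
          ⟨n, by rw [← hn, smul_neg, neg_neg]⟩
      · intro hu
        rw [Set.mem_neg] at hu
        obtain ⟨n, hn⟩ := AddSubmonoid.mem_closure_singleton.mp hu
        exact AddSubmonoid.mem_closure_singleton.mpr
          ⟨n, by rw [smul_neg, hn, neg_neg]⟩
    have hbase0 : IsBaseSet ((LinearMap.ker B).mkQ '' R)
        {(LinearMap.ker B).mkQ α₀} 1 := by
      refine ⟨?_, Set.finite_singleton _, by simp, ?_, ?_⟩
      · intro v hv
        rw [Set.mem_singleton_iff] at hv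
        exact ⟨α₀, hα₀R, hv.symm⟩
      · exact LinearIndepOn.singleton (v := id) hπα₀ne
      · rw [hπeq, hnn, neg_neg]
        conv_lhs => rw [hb1eq]
        rw [Set.union_comm]
    have := hmin hbase0
    exact_mod_cast this
  -- apply the abstract core classification
  obtain ⟨hk1Z, hcases⟩ := core_main (fun r x μ => v3 α₁ a b r x (y₀*μ) ∈ R)
    (k α₁ : ℤ) (k α₀ : ℤ) x₀ r₀ (g α₁) (g α₀) hk₁pos hk₀pos hr₀neg
    hreflT hrangeT hP1T hP0sT hP0lT hprimT hmin2T
  have hk1 : k α₁ = 1 := by exact_mod_cast hk1Z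
  have hB10 : B α₁ α₀ = ((r₀:ℤ):ℝ) * B α₁ α₁ := by rw [hα₀eq, hBv3]
  have hB01 : B α₀ α₁ = ((r₀:ℤ):ℝ) * B α₁ α₁ := by
    rw [hform α₀ α₁, hB10]
    field_simp
  have hB00 : B α₀ α₀ = (((r₀:ℤ):ℝ) * ((r₀:ℤ):ℝ)) * B α₁ α₁ := by
    rw [hform α₀ α₀, hB10]
    field_simp
  refine ⟨hk1, ?_⟩
  rcases hcases with ⟨hr, hk₀⟩ | ⟨hr, hk₀, hg1⟩ | ⟨hr, hg0, hk₀⟩ | ⟨hr, hg0, hk₀, hg1⟩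
  · have hk₀n : k α₀ = 1 := by exact_mod_cast hk₀
    have hBeq : 2 * B α₀ α₁ = -(2:ℝ) * B α₀ α₀ := by
      rw [hB01, hB00, hr]; push_cast; ring
    cases hg0 : g α₀ <;> cases hg1 : g α₁
    · exact Or.inl ⟨hBeq, hk₀n, rfl, rfl⟩
    · exact Or.inr (Or.inl ⟨hBeq, hk₀n, rfl, rfl⟩)
    · exact Or.inr (Or.inr (Or.inl ⟨hBeq, hk₀n, rfl, rfl⟩))
    · exact Or.inr (Or.inr (Or.inr (Or.inl ⟨hBeq, hk₀n, rfl, rfl⟩)))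
  · have hk₀n : k α₀ = 2 := by exact_mod_cast hk₀
    have hBeq : 2 * B α₀ α₁ = -(2:ℝ) * B α₀ α₀ := by
      rw [hB01, hB00, hr]; push_cast; ring
    cases hg0 : g α₀
    · exact Or.inr (Or.inr (Or.inr (Or.inr (Or.inl ⟨hBeq, hk₀n, rfl, hg1⟩))))
    · exact Or.inr (Or.inr (Or.inr (Or.inr (Or.inr (Or.inl ⟨hBeq, hk₀n, rfl, hg1⟩)))))
  · have hBeq : 2 * B α₀ α₁ = -(1:ℝ) * B α₀ α₀ := by
      rw [hB01, hB00, hr]; push_cast; ring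
    rcases hk₀ with hk₀ | hk₀
    · have hk₀n : k α₀ = 1 := by exact_mod_cast hk₀
      cases hg1 : g α₁
      · exact Or.inr (Or.inr (Or.inr (Or.inr (Or.inr (Or.inr (Or.inl
          ⟨hBeq, hk₀n, hg0, rfl⟩))))))
      · exact Or.inr (Or.inr (Or.inr (Or.inr (Or.inr (Or.inr (Or.inr (Or.inl
          ⟨hBeq, hk₀n, hg0, rfl⟩)))))))
    · have hk₀n : k α₀ = 2 := by exact_mod_cast hk₀
      cases hg1 : g α₁
      · exact Or.inr (Or.inr (Or.inr (Or.inr (Or.inr (Or.inr (Or.inr (Or.inr (Or.inl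
          ⟨hBeq, hk₀n, hg0, rfl⟩))))))))
      · exact Or.inr (Or.inr (Or.inr (Or.inr (Or.inr (Or.inr (Or.inr (Or.inr (Or.inr (Or.inl
          ⟨hBeq, hk₀n, hg0, rfl⟩)))))))))
  · have hk₀n : k α₀ = 4 := by exact_mod_cast hk₀
    have hBeq : 2 * B α₀ α₁ = -(1:ℝ) * B α₀ α₀ := by
      rw [hB01, hB00, hr]; push_cast; ring
    exact Or.inr (Or.inr (Or.inr (Or.inr (Or.inr (Or.inr (Or.inr (Or.inr (Or.inr (Or.inr
      ⟨hBeq, hk₀n, hg0, hg1⟩)))))))))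
end

section
/- For every positive integer k, [(ad Ē₁)^k(Ē₂), (ad F̄₁)^k(F̄₂)] = k!·(∏_{m=1}^{k−1}((γ₁^∨,γ₂) + m))·(k·(γ₁,γ₂^∨)·h̄_{γ₁^∨} + (γ₁^∨,γ₂)·h̄_{γ₂^∨}). -/
noncomputable section

/-- In a complex Lie algebra containing `h̄_γ, Ē₁, Ē₂, F̄₁, F̄₂`
with the Heisenberg-type relations of Lemma 5.1, one has, for every `k ≥ 1`,
`[(ad Ē₁)^k Ē₂, (ad F̄₁)^k F̄₂] =
  k! (∏_{m=1}^{k-1} ((γ₁^∨,γ₂)+m)) (k (γ₁,γ₂^∨) h̄_{γ₁^∨} + (γ₁^∨,γ₂) h̄_{γ₂^∨})`. -/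
theorem stmt14 {L : Type*} [LieRing L] [LieAlgebra ℂ L]
    {V' : Type*} [AddCommGroup V'] [Module ℂ V']
    (hdim : Module.finrank ℂ V' = 2)
    (B : LinearMap.BilinForm ℂ V')
    (hsymm : ∀ u v, B u v = B v u)
    (hnd : ∀ v : V', (∀ u : V', B v u = 0) → v = 0)
    (γ₁ γ₂ : V') (hγ₁ : B γ₁ γ₁ ≠ 0) (hγ₂ : B γ₂ γ₂ ≠ 0)
    (h : V' → L) (E₁ E₂ F₁ F₂ : L)
    (hlin : ∀ (x x' : ℂ) (σ τ : V'), h (x • σ + x' • τ) = x • h σ + x' • h τ)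
    (hhh : ∀ σ τ : V', ⁅h σ, h τ⁆ = 0)
    (hhE1 : ∀ σ : V', ⁅h σ, E₁⁆ = B σ γ₁ • E₁)
    (hhE2 : ∀ σ : V', ⁅h σ, E₂⁆ = B σ γ₂ • E₂)
    (hhF1 : ∀ σ : V', ⁅h σ, F₁⁆ = -(B σ γ₁) • F₁)
    (hhF2 : ∀ σ : V', ⁅h σ, F₂⁆ = -(B σ γ₂) • F₂)
    (hEF11 : ⁅E₁, F₁⁆ = h ((2 / B γ₁ γ₁) • γ₁))
    (hEF22 : ⁅E₂, F₂⁆ = h ((2 / B γ₂ γ₂) • γ₂))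
    (hEF12 : ⁅E₁, F₂⁆ = 0)
    (hEF21 : ⁅E₂, F₁⁆ = 0) :
    ∀ k : ℕ, 0 < k →
      ⁅((LieAlgebra.ad ℂ L E₁) ^ k) E₂, ((LieAlgebra.ad ℂ L F₁) ^ k) F₂⁆
        = ((k.factorial : ℂ) *
            ∏ m ∈ Finset.Icc 1 (k - 1), (2 * B γ₁ γ₂ / B γ₁ γ₁ + (m : ℂ))) •
          (((k : ℂ) * (2 * B γ₁ γ₂ / B γ₂ γ₂)) • h ((2 / B γ₁ γ₁) • γ₁) +
            (2 * B γ₁ γ₂ / B γ₁ γ₁) • h ((2 / B γ₂ γ₂) • γ₂)) := by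
  set a : ℂ := 2 * B γ₁ γ₂ / B γ₁ γ₁ with ha
  set b : ℂ := 2 * B γ₁ γ₂ / B γ₂ γ₂ with hb
  set v₁ : V' := (2 / B γ₁ γ₁) • γ₁ with hv₁
  set v₂ : V' := (2 / B γ₂ γ₂) • γ₂ with hv₂
  set E : ℕ → L := fun k => ((LieAlgebra.ad ℂ L E₁) ^ k) E₂ with hE
  set F : ℕ → L := fun k => ((LieAlgebra.ad ℂ L F₁) ^ k) F₂ with hF
  set c : ℕ → ℂ := fun n => (n.factorial : ℂ) * ∏ m ∈ Finset.Icc 1 (n - 1), (a + (m : ℂ))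
    with hc
  -- basic facts about E, F
  have hE0 : E 0 = E₂ := by simp [hE]
  have hF0 : F 0 = F₂ := by simp [hF]
  have hEs : ∀ n, E (n + 1) = ⁅E₁, E n⁆ := by
    intro n; simp only [hE, pow_succ']; rfl
  have hFs : ∀ n, F (n + 1) = ⁅F₁, F n⁆ := by
    intro n; simp only [hF, pow_succ']; rfl
  -- scalar values
  have Bv1γ1 : B v₁ γ₁ = 2 := by
    simp only [hv₁, map_smul, LinearMap.smul_apply, smul_eq_mul]
    field_simp
  have Bv1γ2 : B v₁ γ₂ = a := by
    simp only [hv₁, ha, map_smul, LinearMap.smul_apply, smul_eq_mul]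
    ring
  have Bv2γ1 : B v₂ γ₁ = b := by
    simp only [hv₂, hb, map_smul, LinearMap.smul_apply, smul_eq_mul, hsymm γ₂ γ₁]
    ring
  have Bv2γ2 : B v₂ γ₂ = 2 := by
    simp only [hv₂, map_smul, LinearMap.smul_apply, smul_eq_mul]
    field_simp
  -- recurrence for c
  have hc1 : c 1 = 1 := by simp [hc]
  have hcrec : ∀ n : ℕ, c (n + 1 + 1) = ((n : ℂ) + 2) * (a + ((n : ℂ) + 1)) * c (n + 1) := by
    intro n
    simp only [hc, Nat.add_sub_cancel]
    rw [Finset.prod_Icc_succ_top (Nat.le_add_left 1 n), Nat.factorial_succ]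
    push_cast
    ring
  -- brackets with E₁, F₁ and the Cartan elements
  have hE1h1 : ⁅E₁, h v₁⁆ = (-2 : ℂ) • E₁ := by
    rw [← lie_skew, hhE1, Bv1γ1]; module
  have hE1h2 : ⁅E₁, h v₂⁆ = (-b) • E₁ := by
    rw [← lie_skew, hhE1, Bv2γ1]; module
  have hF1E1 : ⁅F₁, E₁⁆ = -(h v₁) := by
    rw [← lie_skew, hEF11]
  have hF1E2 : ⁅F₁, E₂⁆ = 0 := by
    rw [← lie_skew, hEF21, neg_zero]
  -- weights of E n and F n
  have whE : ∀ (σ : V') (n : ℕ), ⁅h σ, E n⁆ = ((n : ℂ) * B σ γ₁ + B σ γ₂) • E n := by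
    intro σ n
    induction n with
    | zero => simpa [hE0] using hhE2 σ
    | succ n ih =>
      rw [hEs, leibniz_lie, hhE1, ih, smul_lie, lie_smul, ← hEs]
      match_scalars <;> push_cast <;> ring
  have whF : ∀ (σ : V') (n : ℕ), ⁅h σ, F n⁆ = (-((n : ℂ) * B σ γ₁ + B σ γ₂)) • F n := by
    intro σ n
    induction n with
    | zero => simpa [hF0] using hhF2 σ
    | succ n ih =>
      rw [hFs, leibniz_lie, hhF1, ih, smul_lie, lie_smul, ← hFs]
      match_scalars <;> push_cast <;> ring
  have whE1 : ∀ n : ℕ, ⁅h v₁, E n⁆ = (2 * (n : ℂ) + a) • E n := by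
    intro n; rw [whE, Bv1γ1, Bv1γ2]; ring_nf
  have whF1 : ∀ n : ℕ, ⁅h v₁, F n⁆ = (-(2 * (n : ℂ) + a)) • F n := by
    intro n; rw [whF, Bv1γ1, Bv1γ2]; ring_nf
  -- ⁅F₁, E (n+1)⁆
  have hFE : ∀ n : ℕ, ⁅F₁, E (n + 1)⁆ = (-(((n : ℂ) + 1) * (a + n))) • E n := by
    intro n
    induction n with
    | zero =>
      rw [hEs, leibniz_lie, hF1E1, hE0, hF1E2, lie_zero, add_zero, neg_lie, hhE2, Bv1γ2]
      match_scalars <;> push_cast <;> ring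
    | succ n ih =>
      rw [hEs, leibniz_lie, hF1E1, neg_lie, whE1 (n + 1), ih, lie_smul, ← hEs]
      match_scalars <;> push_cast <;> ring
  -- ⁅E₁, F (n+1)⁆
  have hEF : ∀ n : ℕ, ⁅E₁, F (n + 1)⁆ = (-(((n : ℂ) + 1) * (a + n))) • F n := by
    intro n
    induction n with
    | zero =>
      rw [hFs, leibniz_lie, hEF11, hF0, hEF12, lie_zero, add_zero, hhF2, Bv1γ2]
      match_scalars <;> push_cast <;> ring
    | succ n ih =>
      rw [hFs, leibniz_lie, hEF11, whF1 (n + 1), ih, lie_smul, ← hFs]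
      match_scalars <;> push_cast <;> ring
  -- main simultaneous induction
  have main : ∀ n : ℕ,
      ⁅E (n + 1), F (n + 1)⁆ = c (n + 1) • (((((n : ℂ) + 1) * b) • h v₁) + a • h v₂) ∧
      ⁅E (n + 1), F n⁆ = (-(c (n + 1) * b)) • E₁ := by
    intro n
    induction n with
    | zero =>
      have hU' : ⁅E (0 + 1), F₂⁆ = (-(c (0 + 1) * b)) • E₁ := by
        rw [hEs, hE0, lie_lie, hEF22, hEF12, lie_zero, sub_zero, hE1h2,
          show c (0 + 1) = 1 from hc1]
        match_scalars <;> push_cast <;> ring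
      have hEF1' : ⁅E (0 + 1), F₁⁆ = a • E₂ := by
        rw [← lie_skew, hFE 0, hE0]
        match_scalars <;> push_cast <;> ring
      constructor
      · rw [hFs, hF0, leibniz_lie, hEF1', smul_lie, hEF22, hU', lie_smul, hF1E1,
          show c (0 + 1) = 1 from hc1]
        match_scalars <;> push_cast <;> ring
      · rw [hF0]; exact hU'
    | succ n ih =>
      obtain ⟨ihT, ihU⟩ := ih
      have hU : ⁅E (n + 1 + 1), F (n + 1)⁆ = (-(c (n + 1 + 1) * b)) • E₁ := by
        rw [hEs, lie_lie, ihT, hEF n]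
        simp only [lie_smul, lie_add, lie_neg, smul_lie, neg_smul, smul_neg, neg_neg,
          sub_neg_eq_add]
        rw [hE1h1, hE1h2, ihU, hcrec]
        match_scalars <;> push_cast <;> ring
      have hEF1 : ⁅E (n + 1 + 1), F₁⁆ = (((n : ℂ) + 2) * (a + ((n : ℂ) + 1))) • E (n + 1) := by
        rw [← lie_skew, hFE (n + 1)]
        match_scalars <;> push_cast <;> ring
      constructor
      · rw [hFs, leibniz_lie, hEF1, smul_lie, ihT, hU, lie_smul, hF1E1, hcrec]
        match_scalars <;> push_cast <;> ring
      · exact hU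
  -- conclude
  intro k hk
  obtain ⟨n, rfl⟩ : ∃ n, k = n + 1 := ⟨k - 1, (Nat.succ_pred_eq_of_pos hk).symm⟩
  have := (main n).1
  rw [hE, hF] at this
  rw [this, hc]
  push_cast
  ring_nf
end
end
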